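/- arXiv:1609.07043 — 4 statements merged into one kernel-verified Lean document; each statement's English description precedes it below -/
import Mathlib

section
/- Let G be a graph all of whose degrees are at most D < ∞, let p ∈ [0,1] and let c < 1. Suppose that for every vertex x of G there exists a finite connected vertex set S_x with x ∈ S_x and φ_p^x(S_x) ≤ c. Then Bernoulli(p) bond percolation on G almost surely has no infinite cluster; that is, P_p(|C_v| = ∞) = 0 for every vertex v of G. -/
open MeasureTheory ENNReal

namespace PercolationPaper

variable {V : Type*}

/-- The spanning subgraph of `G` consisting of the edges that are open in the
configuration `ω`. -/
def openSG (G : SimpleGraph V) (ω : Sym2 V → Bool) : SimpleGraph V where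
  Adj a b := G.Adj a b ∧ ω s(a, b) = true
  symm := ⟨fun a b h => ⟨h.1.symm, by rw [Sym2.eq_swap]; exact h.2⟩⟩
  loopless := ⟨fun a h => G.loopless.irrefl a h.1⟩

/-- The open cluster of the vertex `v` in the configuration `ω`. -/
def cluster (G : SimpleGraph V) (ω : Sym2 V → Bool) (v : V) : Set V :=
  {x | (openSG G ω).Reachable v x}

/-- The subgraph of open edges both of whose endpoints lie in `S`:
`x ↔ y in S` is reachability in this graph. -/
def openIn (G : SimpleGraph V) (S : Set V) (ω : Sym2 V → Bool) : SimpleGraph V where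
  Adj a b := G.Adj a b ∧ a ∈ S ∧ b ∈ S ∧ ω s(a, b) = true
  symm := ⟨fun a b h => ⟨h.1.symm, h.2.2.1, h.2.1, by rw [Sym2.eq_swap]; exact h.2.2.2⟩⟩
  loopless := ⟨fun a h => G.loopless.irrefl a h.1⟩

/-- `P` is Bernoulli(`p`) bond percolation on `G`: a probability measure on
configurations under which, for any finite set `F` of edges of `G`, the states of the
edges of `F` are independent, each open with probability `p`. -/
def IsBernoulli (G : SimpleGraph V) (p : ℝ) (P : Measure (Sym2 V → Bool)) : Prop :=
  IsProbabilityMeasure P ∧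
    ∀ F : Finset (Sym2 V), (↑F ⊆ G.edgeSet) → ∀ f : Sym2 V → Bool,
      P {ω | ∀ e ∈ F, ω e = f e} =
        ∏ e ∈ F, (if f e then ENNReal.ofReal p else ENNReal.ofReal (1 - p))

/-- `φ_p^x(S) = p · Σ_{(u,w) : u∈S, w∉S, u∼w} P_p(x ↔ u in S)`. -/
noncomputable def phi (G : SimpleGraph V) (P : Measure (Sym2 V → Bool)) (p : ℝ)
    (x : V) (S : Set V) : ℝ≥0∞ :=
  ENNReal.ofReal p *
    ∑' d : {d : V × V // G.Adj d.1 d.2 ∧ d.1 ∈ S ∧ d.2 ∉ S},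
      P {ω | (openIn G S ω).Reachable x d.1.1}

/-- The expected number of vertices of the open cluster of `v`. -/
noncomputable def expCluster (G : SimpleGraph V) (P : Measure (Sym2 V → Bool)) (v : V) :
    ℝ≥0∞ :=
  ∫⁻ ω, ((cluster G ω v).encard : ℝ≥0∞) ∂P

/-- The ball of radius `r` around `v` in the graph metric of `G`. -/
def gball (G : SimpleGraph V) (v : V) (r : ℕ) : Set V :=
  {x | ∃ w : G.Walk v x, w.length ≤ r}

/-- All degrees of `G` are at most `D`. -/
def DegLE (G : SimpleGraph V) (D : ℕ) : Prop :=
  ∀ v : V, (G.neighborSet v).encard ≤ D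


attribute [local instance] Classical.propDecidable

/-- Event `E` is determined by the coordinates in `F`. -/
def DeterminedBy (E : Set (Sym2 V → Bool)) (F : Set (Sym2 V)) : Prop :=
  ∀ ω ω', (∀ e ∈ F, ω e = ω' e) → ω ∈ E → ω' ∈ E

lemma DeterminedBy.inter {E₁ E₂ : Set (Sym2 V → Bool)} {F₁ F₂ : Set (Sym2 V)}
    (h₁ : DeterminedBy E₁ F₁) (h₂ : DeterminedBy E₂ F₂) :
    DeterminedBy (E₁ ∩ E₂) (F₁ ∪ F₂) := by
  intro ω ω' hag hω
  exact ⟨h₁ ω ω' (fun e he => hag e (Or.inl he)) hω.1,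
    h₂ ω ω' (fun e he => hag e (Or.inr he)) hω.2⟩

def cylE (F : Finset (Sym2 V)) (g : Sym2 V → Bool) : Set (Sym2 V → Bool) :=
  {ω | ∀ e ∈ F, ω e = g e}

lemma measurableSet_cylE (F : Finset (Sym2 V)) (g : Sym2 V → Bool) :
    MeasurableSet (cylE F g) := by
  have : cylE F g = ⋂ e ∈ F, (fun ω : Sym2 V → Bool => ω e) ⁻¹' {g e} := by
    ext ω; simp [cylE]
  rw [this]
  exact MeasurableSet.biInter F.countable_toSet fun e _ =>
    measurable_pi_apply e (measurableSet_singleton _)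

noncomputable def extFun (F : Finset (Sym2 V)) (g : {e // e ∈ F} → Bool) : Sym2 V → Bool :=
  fun e => if h : e ∈ F then g ⟨e, h⟩ else false

lemma mem_cylE_extFun {F : Finset (Sym2 V)} {g : {e // e ∈ F} → Bool} {ω : Sym2 V → Bool} :
    ω ∈ cylE F (extFun F g) ↔ ∀ e : {e // e ∈ F}, ω e.1 = g e := by
  constructor
  · intro h e; have := h e.1 e.2; rwa [extFun, dif_pos e.2] at this
  · intro h e he; rw [extFun, dif_pos he]; exact h ⟨e, he⟩

noncomputable def goodSet (F : Finset (Sym2 V)) (E : Set (Sym2 V → Bool)) :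
    Finset ({e // e ∈ F} → Bool) :=
  Finset.univ.filter (fun g => extFun F g ∈ E)

lemma determined_decomp {E : Set (Sym2 V → Bool)} {F : Finset (Sym2 V)}
    (hdet : DeterminedBy E ↑F) :
    E = ⋃ g ∈ goodSet F E, cylE F (extFun F g) := by
  ext ω
  simp only [Set.mem_iUnion, goodSet, Finset.mem_filter, Finset.mem_univ, true_and]
  constructor
  · intro hω
    refine ⟨fun e => ω e.1, hdet ω _ (fun e he => by
      have he' : e ∈ F := he
      rw [extFun, dif_pos he']) hω, ?_⟩
    rw [mem_cylE_extFun]; intro e; rfl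
  · rintro ⟨g, hg, hcyl⟩
    exact hdet _ ω (fun e he => ((hcyl e he)).symm) hg

lemma cylE_disjoint {F : Finset (Sym2 V)} {g g' : {e // e ∈ F} → Bool} (h : g ≠ g') :
    Disjoint (cylE F (extFun F g)) (cylE F (extFun F g')) := by
  rw [Set.disjoint_left]
  intro ω hω hω'
  apply h
  funext e
  rw [← (mem_cylE_extFun.1 hω) e, ← (mem_cylE_extFun.1 hω') e]

lemma P_determined {P : Measure (Sym2 V → Bool)} {E : Set (Sym2 V → Bool)}
    {F : Finset (Sym2 V)} (hdet : DeterminedBy E ↑F) :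
    P E = ∑ g ∈ goodSet F E, P (cylE F (extFun F g)) := by
  nth_rewrite 1 [determined_decomp hdet]
  exact measure_biUnion_finset
    (fun g _ g' _ hne => cylE_disjoint hne)
    (fun g _ => measurableSet_cylE _ _)

lemma measurableSet_of_determined {E : Set (Sym2 V → Bool)} {F : Set (Sym2 V)}
    (hF : F.Finite) (hdet : DeterminedBy E F) : MeasurableSet E := by
  rw [show F = ↑hF.toFinset by simp] at hdet
  rw [determined_decomp hdet]
  exact (goodSet _ E).measurableSet_biUnion (fun g _ => measurableSet_cylE _ _)

lemma P_cylE {G : SimpleGraph V} {p : ℝ} {P : Measure (Sym2 V → Bool)}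
    (hP : IsBernoulli G p P) {F : Finset (Sym2 V)} (hF : ↑F ⊆ G.edgeSet)
    (g : Sym2 V → Bool) :
    P (cylE F g) = ∏ e ∈ F, (if g e then ENNReal.ofReal p else ENNReal.ofReal (1 - p)) :=
  hP.2 F hF g

noncomputable def combFun (F₁ : Finset (Sym2 V)) (g₁ g₂ : Sym2 V → Bool) : Sym2 V → Bool :=
  fun e => if e ∈ F₁ then g₁ e else g₂ e

lemma cylE_inter {F₁ F₂ : Finset (Sym2 V)} (hd : Disjoint F₁ F₂) (g₁ g₂ : Sym2 V → Bool) :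
    cylE (F₁ ∪ F₂) (combFun F₁ g₁ g₂) = cylE F₁ g₁ ∩ cylE F₂ g₂ := by
  ext ω
  simp only [cylE, Set.mem_setOf_eq, Set.mem_inter_iff, Finset.mem_union]
  constructor
  · intro h
    refine ⟨fun e he => ?_, fun e he => ?_⟩
    · rw [h e (Or.inl he), combFun, if_pos he]
    · rw [h e (Or.inr he), combFun, if_neg (Finset.disjoint_right.1 hd he)]
  · rintro ⟨h₁, h₂⟩ e he
    rcases he with he | he
    · rw [combFun, if_pos he]; exact h₁ e he
    · rw [combFun, if_neg (Finset.disjoint_right.1 hd he)]; exact h₂ e he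

lemma P_cylE_inter {G : SimpleGraph V} {p : ℝ} {P : Measure (Sym2 V → Bool)}
    (hP : IsBernoulli G p P) {F₁ F₂ : Finset (Sym2 V)} (hd : Disjoint F₁ F₂)
    (h₁ : ↑F₁ ⊆ G.edgeSet) (h₂ : ↑F₂ ⊆ G.edgeSet) (g₁ g₂ : Sym2 V → Bool) :
    P (cylE F₁ g₁ ∩ cylE F₂ g₂) = P (cylE F₁ g₁) * P (cylE F₂ g₂) := by
  rw [← cylE_inter hd g₁ g₂, P_cylE hP (by rw [Finset.coe_union]; exact Set.union_subset h₁ h₂),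
    Finset.prod_union hd, P_cylE hP h₁, P_cylE hP h₂]
  congr 1
  · exact Finset.prod_congr rfl fun e he => by rw [combFun, if_pos he]
  · exact Finset.prod_congr rfl fun e he => by
      rw [combFun, if_neg (Finset.disjoint_right.1 hd he)]

lemma indep2 {G : SimpleGraph V} {p : ℝ} {P : Measure (Sym2 V → Bool)}
    (hP : IsBernoulli G p P) {E₁ E₂ : Set (Sym2 V → Bool)} {F₁ F₂ : Finset (Sym2 V)}
    (hdet₁ : DeterminedBy E₁ ↑F₁) (hdet₂ : DeterminedBy E₂ ↑F₂)
    (hd : Disjoint F₁ F₂) (h₁ : ↑F₁ ⊆ G.edgeSet) (h₂ : ↑F₂ ⊆ G.edgeSet) :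
    P (E₁ ∩ E₂) = P E₁ * P E₂ := by
  have hE : E₁ ∩ E₂ = ⋃ gg ∈ goodSet F₁ E₁ ×ˢ goodSet F₂ E₂,
      (cylE F₁ (extFun F₁ gg.1) ∩ cylE F₂ (extFun F₂ gg.2)) := by
    nth_rewrite 1 [determined_decomp hdet₁, determined_decomp hdet₂]
    ext ω
    simp only [Set.mem_inter_iff, Set.mem_iUnion, Finset.mem_product]
    constructor
    · rintro ⟨⟨g₁, hg₁, hc₁⟩, ⟨g₂, hg₂, hc₂⟩⟩
      exact ⟨(g₁, g₂), ⟨hg₁, hg₂⟩, hc₁, hc₂⟩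
    · rintro ⟨⟨g₁, g₂⟩, ⟨hg₁, hg₂⟩, hc₁, hc₂⟩
      exact ⟨⟨g₁, hg₁, hc₁⟩, ⟨g₂, hg₂, hc₂⟩⟩
  rw [hE, measure_biUnion_finset ?_ (fun gg _ =>
      ((measurableSet_cylE _ _).inter (measurableSet_cylE _ _)))]
  · rw [Finset.sum_product]
    rw [P_determined (P := P) hdet₁, P_determined (P := P) hdet₂, Finset.sum_mul_sum]
    exact Finset.sum_congr rfl fun g₁ _ => Finset.sum_congr rfl fun g₂ _ =>
      P_cylE_inter hP hd h₁ h₂ _ _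
  · intro gg _ gg' _ hne
    by_cases h1 : gg.1 = gg'.1
    · have h2 : gg.2 ≠ gg'.2 := fun h2 => hne (Prod.ext h1 h2)
      exact Set.disjoint_left.2 fun ω hω hω' =>
        Set.disjoint_left.1 (cylE_disjoint h2) hω.2 hω'.2
    · exact Set.disjoint_left.2 fun ω hω hω' =>
        Set.disjoint_left.1 (cylE_disjoint h1) hω.1 hω'.1

section Graph

variable (G : SimpleGraph V)

/-- The cluster of `x` within the vertex set `T`. -/
def Cl (T : Set V) (ω : Sym2 V → Bool) (x : V) : Set V :=
  {y | (openIn G T ω).Reachable x y}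

lemma openIn_mono {T T' : Set V} (h : T ⊆ T') (ω : Sym2 V → Bool) :
    openIn G T ω ≤ openIn G T' ω := by
  intro a b ha
  exact ⟨ha.1, h ha.2.1, h ha.2.2.1, ha.2.2.2⟩

lemma walk_end_mem {T : Set V} {ω : Sym2 V → Bool} :
    ∀ {z y : V}, (openIn G T ω).Walk z y → z ∈ T → y ∈ T := by
  intro z y p
  induction p with
  | nil => exact id
  | cons h q ih => intro _; exact ih h.2.2.1

lemma walk_support_mem {T : Set V} {ω : Sym2 V → Bool} :
    ∀ {z y : V} (p : (openIn G T ω).Walk z y), z ∈ T → ∀ v ∈ p.support, v ∈ T := by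
  intro z y p
  induction p with
  | nil => intro hz v hv; rw [SimpleGraph.Walk.support_nil, List.mem_singleton] at hv
           exact hv ▸ hz
  | cons h q ih =>
    intro hz v hv
    rw [SimpleGraph.Walk.support_cons, List.mem_cons] at hv
    rcases hv with rfl | hv
    · exact hz
    · exact ih h.2.2.1 v hv

lemma reach_transfer {T T' : Set V} {ω : Sym2 V → Bool} :
    ∀ {z y : V} (p : (openIn G T ω).Walk z y), (∀ v ∈ p.support, v ∈ T') →
      (openIn G T' ω).Reachable z y := by
  intro z y p
  induction p with
  | nil => intro _; exact SimpleGraph.Reachable.refl _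
  | @cons a b y h q ih =>
    intro hs
    have h1 : a ∈ T' := hs _ (SimpleGraph.Walk.start_mem_support _)
    have h2 : b ∈ T' := hs _ (by
      rw [SimpleGraph.Walk.support_cons]
      exact List.mem_cons_of_mem _ (SimpleGraph.Walk.start_mem_support _))
    have hadj : (openIn G T' ω).Adj a b := ⟨h.1, h1, h2, h.2.2.2⟩
    exact (SimpleGraph.Adj.reachable hadj).trans
      (ih fun v hv => hs v (by rw [SimpleGraph.Walk.support_cons]; exact List.mem_cons_of_mem _ hv))

lemma Cl_subset {T : Set V} {ω : Sym2 V → Bool} {x : V} (hx : x ∈ T) :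
    Cl G T ω x ⊆ T := by
  intro y hy
  obtain ⟨p⟩ := hy
  exact walk_end_mem G p hx

lemma mem_Cl_self {T : Set V} {ω : Sym2 V → Bool} {x : V} : x ∈ Cl G T ω x :=
  SimpleGraph.Reachable.refl x

lemma Cl_mono {T T' : Set V} (h : T ⊆ T') {ω : Sym2 V → Bool} {x : V} :
    Cl G T ω x ⊆ Cl G T' ω x :=
  fun _ hy => hy.mono (openIn_mono G h ω)

/-- Edges of `G` with both endpoints in `T`. -/
def sym2Over (T : Set V) : Set (Sym2 V) :=
  {e | ∃ u w, e = s(u, w) ∧ G.Adj u w ∧ u ∈ T ∧ w ∈ T}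

/-- Edges of `G` with both endpoints in `T`, at least one of them in `A`. -/
def sym2Touch (T A : Set V) : Set (Sym2 V) :=
  {e | ∃ u w, e = s(u, w) ∧ G.Adj u w ∧ u ∈ T ∧ w ∈ T ∧ u ∈ A}

lemma sym2Over_finite {T : Set V} (hT : T.Finite) : (sym2Over G T).Finite := by
  apply Set.Finite.subset ((hT.prod hT).image (fun uw => s(uw.1, uw.2)))
  rintro e ⟨u, w, rfl, _, hu, hw⟩
  exact ⟨(u, w), ⟨hu, hw⟩, rfl⟩

lemma sym2Touch_finite {T A : Set V} (hT : T.Finite) : (sym2Touch G T A).Finite := by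
  apply Set.Finite.subset ((hT.prod hT).image (fun uw => s(uw.1, uw.2)))
  rintro e ⟨u, w, rfl, _, hu, hw, _⟩
  exact ⟨(u, w), ⟨hu, hw⟩, rfl⟩

lemma sym2Touch_subset_over {T A : Set V} : sym2Touch G T A ⊆ sym2Over G T := by
  rintro e ⟨u, w, rfl, hadj, hu, hw, _⟩
  exact ⟨u, w, rfl, hadj, hu, hw⟩

lemma sym2Over_subset_edgeSet {T : Set V} : sym2Over G T ⊆ G.edgeSet := by
  rintro e ⟨u, w, rfl, hadj, _, _⟩
  exact hadj

lemma sym2Over_mono {T T' : Set V} (h : T ⊆ T') : sym2Over G T ⊆ sym2Over G T' := by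
  rintro e ⟨u, w, rfl, hadj, hu, hw⟩
  exact ⟨u, w, rfl, hadj, h hu, h hw⟩

/-- Determinedness of the event `Cl G T ω x = A`. -/
lemma det_ClEq {T A : Set V} {x : V} :
    DeterminedBy {ω | Cl G T ω x = A} (sym2Touch G T A) := by
  intro ω ω' hag hω
  simp only [Set.mem_setOf_eq] at hω ⊢
  -- (i) every vertex of A is reachable in ω'
  have key1 : ∀ {z y : V}, (openIn G T ω).Walk z y → z ∈ A →
      (openIn G T ω').Reachable z y := by
    intro z y p
    induction p with
    | nil => intro _; exact SimpleGraph.Reachable.refl _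
    | @cons z w y h q ih =>
      intro hz
      have hwA : w ∈ A := by
        rw [← hω]
        have hxz : (openIn G T ω).Reachable x z := by rw [← hω] at hz; exact hz
        exact hxz.trans (SimpleGraph.Adj.reachable h)
      have hedge : s(z, w) ∈ sym2Touch G T A := ⟨z, w, rfl, h.1, h.2.1, h.2.2.1, hz⟩
      have hadj' : (openIn G T ω').Adj z w :=
        ⟨h.1, h.2.1, h.2.2.1, by rw [← hag _ hedge]; exact h.2.2.2⟩
      exact (SimpleGraph.Adj.reachable hadj').trans (ih hwA)
  -- (ii) nothing outside A is reachable in ω'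
  have key2 : ∀ {z y : V}, (openIn G T ω').Walk z y → z ∈ A → y ∈ A := by
    intro z y p
    induction p with
    | nil => exact id
    | @cons z w y h q ih =>
      intro hz
      have hwA : w ∈ A := by
        by_contra hwn
        have hedge : s(z, w) ∈ sym2Touch G T A := ⟨z, w, rfl, h.1, h.2.1, h.2.2.1, hz⟩
        have hadj : (openIn G T ω).Adj z w :=
          ⟨h.1, h.2.1, h.2.2.1, by rw [hag _ hedge]; exact h.2.2.2⟩
        have hxz : (openIn G T ω).Reachable x z := by rw [← hω] at hz; exact hz
        exact hwn (by rw [← hω]; exact hxz.trans (SimpleGraph.Adj.reachable hadj))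
      exact ih hwA
  have hxA : x ∈ A := by rw [← hω]; exact mem_Cl_self G
  apply Set.eq_of_subset_of_subset
  · intro y hy
    obtain ⟨p⟩ := hy
    exact key2 p hxA
  · intro y hy
    rw [← hω] at hy
    obtain ⟨p⟩ := hy
    exact key1 p hxA

end Graph

section VCdef

variable (G : SimpleGraph V) (S : V → Set V)

/-- Neighbors of the set `S x`. -/
def NS (x : V) : Set V := {b | ∃ a ∈ S x, G.Adj a b}

/-- Finite universe of vertices relevant to `n` levels of exploration from `x`. -/
def Uset : ℕ → V → Set V
  | 0, _ => ∅
  | (n+1), x => S x ∪ NS G S x ∪ ⋃ b ∈ NS G S x, Uset n b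

/-- The event that the exploration starting at `x`, avoiding `W`, survives `n` rounds. -/
def VC : ℕ → V → Set V → Set (Sym2 V → Bool)
  | 0, _, _ => Set.univ
  | (n+1), x, W =>
    {ω | ∃ a b, G.Adj a b ∧ a ∈ S x \ W ∧ b ∉ S x ∧ b ∉ W ∧
      a ∈ Cl G (S x \ W) ω x ∧ b ∉ Cl G (S x \ W) ω x ∧ ω s(a, b) = true ∧
      ω ∈ VC n b (W ∪ Cl G (S x \ W) ω x)}

variable {G S}

lemma neighborSet_finite {D : ℕ} (hD : DegLE G D) (v : V) : (G.neighborSet v).Finite := by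
  have h := hD v
  rw [← Set.encard_ne_top_iff]
  intro hh
  rw [hh] at h
  simp at h

lemma NS_finite {D : ℕ} (hD : DegLE G D) (hS : ∀ v, (S v).Finite) (x : V) :
    (NS G S x).Finite := by
  apply Set.Finite.subset ((hS x).biUnion (fun a _ => neighborSet_finite hD a))
  rintro b ⟨a, ha, hab⟩
  exact Set.mem_biUnion ha hab

lemma Uset_finite {D : ℕ} (hD : DegLE G D) (hS : ∀ v, (S v).Finite) :
    ∀ n x, (Uset G S n x).Finite := by
  intro n
  induction n with
  | zero => intro x; exact Set.finite_empty
  | succ n ih =>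
    intro x
    exact ((hS x).union (NS_finite hD hS x)).union
      ((NS_finite hD hS x).biUnion (fun b _ => ih b))

lemma det_VC : ∀ (n : ℕ) (x : V) (W : Set V),
    DeterminedBy (VC G S n x W) (sym2Over G (Uset G S n x \ W)) := by
  intro n
  induction n with
  | zero => intro x W ω ω' _ _; exact Set.mem_univ _
  | succ n ih =>
    intro x W ω ω' hag hω
    obtain ⟨a, b, hadj, haSW, hbS, hbW, haCl, hbCl, hopen, hrec⟩ := hω
    have hSsub : S x \ W ⊆ Uset G S (n+1) x \ W := fun v hv =>
      ⟨Or.inl (Or.inl hv.1), hv.2⟩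
    have hbNS : b ∈ NS G S x := ⟨a, haSW.1, hadj⟩
    -- the cluster is unchanged
    have hagCl : ∀ e ∈ sym2Touch G (S x \ W) (Cl G (S x \ W) ω x), ω e = ω' e := by
      intro e he
      apply hag
      exact sym2Over_mono G hSsub (sym2Touch_subset_over G he)
    have hCl : Cl G (S x \ W) ω' x = Cl G (S x \ W) ω x :=
      det_ClEq G ω ω' hagCl rfl
    refine ⟨a, b, hadj, haSW, hbS, hbW, ?_, ?_, ?_, ?_⟩
    · rw [hCl]; exact haCl
    · rw [hCl]; exact hbCl
    · rw [← hag s(a, b) ⟨a, b, rfl, hadj, ⟨Or.inl (Or.inl haSW.1), haSW.2⟩,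
        ⟨Or.inl (Or.inr hbNS), hbW⟩⟩]
      exact hopen
    · rw [hCl]
      apply ih b (W ∪ Cl G (S x \ W) ω x) ω ω' ?_ hrec
      intro e he
      apply hag
      obtain ⟨u, w, rfl, huw, hu, hw⟩ := he
      have hsub2 : Uset G S n b \ (W ∪ Cl G (S x \ W) ω x) ⊆ Uset G S (n+1) x \ W := by
        intro v hv
        exact ⟨Or.inr (Set.mem_biUnion hbNS hv.1), fun hvW => hv.2 (Or.inl hvW)⟩
      exact ⟨u, w, rfl, huw, hsub2 hu, hsub2 hw⟩

end VCdef

section Deterministic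

variable {G : SimpleGraph V} {S : V → Set V}

lemma exists_exit {H : SimpleGraph V} {A : Set V} :
    ∀ {s u : V} (p : H.Walk s u), u ∉ A →
      (∃ y z, ∃ (_ : H.Adj y z) (q : H.Walk z u), y ∈ A ∧ z ∉ A ∧ ∀ v ∈ q.support, v ∉ A)
      ∨ (∀ v ∈ p.support, v ∉ A) := by
  intro s u p
  induction p with
  | nil =>
    intro hu
    right
    intro v hv
    rw [SimpleGraph.Walk.support_nil, List.mem_singleton] at hv
    exact hv ▸ hu
  | @cons s w u h q ih =>
    intro hu
    rcases ih hu with hL | hR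
    · exact Or.inl hL
    · by_cases hs : s ∈ A
      · have hw : w ∉ A := hR w (SimpleGraph.Walk.start_mem_support q)
        exact Or.inl ⟨s, w, h, q, hs, hw, hR⟩
      · right
        intro v hv
        rw [SimpleGraph.Walk.support_cons, List.mem_cons] at hv
        rcases hv with rfl | hv
        · exact hs
        · exact hR v hv

/-- If the cluster of `x` avoiding `W` is infinite, then the exploration survives
any number of rounds. -/
lemma det_main {D : ℕ} (hD : DegLE G D) (hSfin : ∀ v, (S v).Finite)
    (hSmem : ∀ v, v ∈ S v) {ω : Sym2 V → Bool} :
    ∀ (n : ℕ) (x : V) (W : Set V), x ∉ W →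
      (Cl G Wᶜ ω x).Infinite → ω ∈ VC G S n x W := by
  intro n
  induction n with
  | zero => intro x W _ _; exact Set.mem_univ _
  | succ n ih =>
    intro x W hxW hK
    set A := Cl G (S x \ W) ω x with hA
    have hxSW : x ∈ S x \ W := ⟨hSmem x, hxW⟩
    have hAsub : A ⊆ S x \ W := Cl_subset G hxSW
    have hAfin : A.Finite := ((hSfin x).diff).subset hAsub
    have hxA : x ∈ A := mem_Cl_self G
    set Z : Set V := {z | (∃ y, y ∈ A ∧ G.Adj y z ∧ ω s(y, z) = true) ∧
      z ∉ S x ∧ z ∉ W ∧ z ∉ A} with hZ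
    have hZfin : Z.Finite := by
      apply Set.Finite.subset (hAfin.biUnion (fun y _ => neighborSet_finite hD y))
      rintro z ⟨⟨y, hyA, hadj, _⟩, _, _, _⟩
      exact Set.mem_biUnion hyA hadj
    have hT : (Cl G Wᶜ ω x \ (S x ∪ A)).Infinite :=
      hK.diff ((hSfin x).union hAfin)
    have hcov : Cl G Wᶜ ω x \ (S x ∪ A) ⊆ ⋃ z ∈ Z, Cl G (W ∪ A)ᶜ ω z := by
      intro u hu
      obtain ⟨p⟩ := hu.1
      have huA : u ∉ A := fun h => hu.2 (Or.inr h)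
      rcases exists_exit p huA with ⟨y, z, hyz, q, hyA, hzA, hqA⟩ | hall
      · have hzW : z ∉ W := hyz.2.2.1
        have hzS : z ∉ S x := by
          intro hzS
          apply hzA
          have hadj : (openIn G (S x \ W) ω).Adj y z :=
            ⟨hyz.1, hAsub hyA, ⟨hzS, hzW⟩, hyz.2.2.2⟩
          exact (show (openIn G (S x \ W) ω).Reachable x y from hyA).trans
            (SimpleGraph.Adj.reachable hadj)
        have hzZ : z ∈ Z := ⟨⟨y, hyA, hyz.1, hyz.2.2.2⟩, hzS, hzW, hzA⟩
        have hreach : (openIn G (W ∪ A)ᶜ ω).Reachable z u := by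
          apply reach_transfer G q
          intro v hv
          have hvW : v ∈ Wᶜ := walk_support_mem G q hzW v hv
          intro hmem
          rcases hmem with hmem | hmem
          · exact hvW hmem
          · exact hqA v hv hmem
        exact Set.mem_biUnion hzZ hreach
      · exact (hall x (SimpleGraph.Walk.start_mem_support p) hxA).elim
    have : ∃ z ∈ Z, (Cl G (W ∪ A)ᶜ ω z).Infinite := by
      by_contra hcon
      push_neg at hcon
      apply hT
      apply Set.Finite.subset (hZfin.biUnion (fun z hz => (hcon z hz)))
      exact hcov
    obtain ⟨z, hzZ, hzInf⟩ := this
    obtain ⟨⟨y, hyA, hadj, hopen⟩, hzS, hzW, hzA⟩ := hzZ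
    refine ⟨y, z, hadj, hAsub hyA, hzS, hzW, hyA, hzA, hopen, ?_⟩
    exact ih z (W ∪ A) (fun h => h.elim hzW hzA) hzInf

end Deterministic

section Probabilistic

variable {G : SimpleGraph V} {S : V → Set V} {P : Measure (Sym2 V → Bool)}
  {p c : ℝ} {D : ℕ}

lemma det_edge (e : Sym2 V) : DeterminedBy {ω : Sym2 V → Bool | ω e = true} {e} := by
  intro ω ω' hag hω
  simp only [Set.mem_setOf_eq] at hω ⊢
  rw [← hag e rfl]
  exact hω

lemma P_edge (hP : IsBernoulli G p P) {e : Sym2 V} (he : e ∈ G.edgeSet) :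
    P {ω : Sym2 V → Bool | ω e = true} = ENNReal.ofReal p := by
  have hset : {ω : Sym2 V → Bool | ω e = true}
      = {ω : Sym2 V → Bool | ∀ e' ∈ ({e} : Finset (Sym2 V)), ω e' = true} := by
    ext ω; simp
  rw [hset, hP.2 {e} (by simpa using he) (fun _ => true)]
  simp

lemma indep2' (hP : IsBernoulli G p P) {E₁ E₂ : Set (Sym2 V → Bool)} {F₁ F₂ : Set (Sym2 V)}
    (hF₁ : F₁.Finite) (hF₂ : F₂.Finite)
    (hdet₁ : DeterminedBy E₁ F₁) (hdet₂ : DeterminedBy E₂ F₂)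
    (hd : Disjoint F₁ F₂) (h₁ : F₁ ⊆ G.edgeSet) (h₂ : F₂ ⊆ G.edgeSet) :
    P (E₁ ∩ E₂) = P E₁ * P E₂ := by
  apply indep2 hP (F₁ := hF₁.toFinset) (F₂ := hF₂.toFinset)
  · rwa [hF₁.coe_toFinset]
  · rwa [hF₂.coe_toFinset]
  · rw [← Finset.disjoint_coe, hF₁.coe_toFinset, hF₂.coe_toFinset]; exact hd
  · rwa [hF₁.coe_toFinset]
  · rwa [hF₂.coe_toFinset]

lemma P_VC (hD : DegLE G D) (hSfin : ∀ v, (S v).Finite) (hSmem : ∀ v, v ∈ S v)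
    (hP : IsBernoulli G p P)
    (hphi : ∀ x, phi G P p x (S x) ≤ ENNReal.ofReal c) :
    ∀ (n : ℕ) (x : V) (W : Set V), x ∉ W →
      P (VC G S n x W) ≤ (ENNReal.ofReal c) ^ n := by
  haveI := hP.1
  intro n
  induction n with
  | zero => intro x W _; simp [VC]
  | succ n ih =>
    intro x W hxW
    have hxSW : x ∈ S x \ W := ⟨hSmem x, hxW⟩
    -- index types
    have hDxfin : Finite {d : V × V // G.Adj d.1 d.2 ∧ d.1 ∈ S x ∧ d.2 ∉ S x} := by
      have : {d : V × V | G.Adj d.1 d.2 ∧ d.1 ∈ S x ∧ d.2 ∉ S x}.Finite := by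
        apply Set.Finite.subset ((hSfin x).prod
          ((hSfin x).biUnion (fun a _ => neighborSet_finite hD a)))
        rintro ⟨a, b⟩ ⟨hadj, haS, hbS⟩
        exact ⟨haS, Set.mem_biUnion haS hadj⟩
      exact this.to_subtype
    have h𝒜fin : Finite {A : Set V // A ⊆ S x \ W} :=
      (Set.Finite.finite_subsets ((hSfin x).diff)).to_subtype
    haveI := hDxfin
    haveI := h𝒜fin
    set K : ℝ≥0∞ := ENNReal.ofReal p * (ENNReal.ofReal c) ^ n with hK
    -- the events
    set Ev : {d : V × V // G.Adj d.1 d.2 ∧ d.1 ∈ S x ∧ d.2 ∉ S x} →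
        {A : Set V // A ⊆ S x \ W} → Set (Sym2 V → Bool) := fun d A =>
      ⋃ (_ : d.1.1 ∈ A.1 ∧ d.1.2 ∉ A.1 ∧ d.1.2 ∉ W),
        ({ω | Cl G (S x \ W) ω x = A.1} ∩
          ({ω | ω s(d.1.1, d.1.2) = true} ∩ VC G S n d.1.2 (W ∪ A.1))) with hEv
    set ClE : {d : V × V // G.Adj d.1 d.2 ∧ d.1 ∈ S x ∧ d.2 ∉ S x} →
        {A : Set V // A ⊆ S x \ W} → Set (Sym2 V → Bool) := fun d A =>
      ⋃ (_ : d.1.1 ∈ A.1 ∧ d.1.2 ∉ A.1 ∧ d.1.2 ∉ W),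
        {ω | Cl G (S x \ W) ω x = A.1} with hClE
    -- containment
    have hsub : VC G S (n+1) x W ⊆ ⋃ d, ⋃ A, Ev d A := by
      intro ω hω
      obtain ⟨a, b, hadj, haSW, hbS, hbW, haCl, hbCl, hopen, hrec⟩ := hω
      refine Set.mem_iUnion.2 ⟨⟨(a, b), hadj, haSW.1, hbS⟩, Set.mem_iUnion.2
        ⟨⟨Cl G (S x \ W) ω x, Cl_subset G hxSW⟩, ?_⟩⟩
      exact Set.mem_iUnion.2 ⟨⟨haCl, hbCl, hbW⟩, rfl, hopen, hrec⟩
    -- per-term bound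
    have hterm : ∀ d A, P (Ev d A) ≤ P (ClE d A) * K := by
      intro d A
      by_cases hcond : d.1.1 ∈ A.1 ∧ d.1.2 ∉ A.1 ∧ d.1.2 ∉ W
      · have hEvEq : Ev d A = {ω | Cl G (S x \ W) ω x = A.1} ∩
            ({ω | ω s(d.1.1, d.1.2) = true} ∩ VC G S n d.1.2 (W ∪ A.1)) := by
          simp only [hEv, Set.iUnion_eq_if, if_pos hcond]
        have hClEq : ClE d A = {ω | Cl G (S x \ W) ω x = A.1} := by
          simp only [hClE, Set.iUnion_eq_if, if_pos hcond]
        -- independence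
        have hF₁ : (sym2Touch G (S x \ W) A.1).Finite := sym2Touch_finite G ((hSfin x).diff)
        have hF₂ : ({s(d.1.1, d.1.2)} : Set (Sym2 V)).Finite := Set.finite_singleton _
        have hF₃ : (sym2Over G (Uset G S n d.1.2 \ (W ∪ A.1))).Finite :=
          sym2Over_finite G ((Uset_finite hD hSfin n d.1.2).diff)
        have hd₂₃ : Disjoint ({s(d.1.1, d.1.2)} : Set (Sym2 V))
            (sym2Over G (Uset G S n d.1.2 \ (W ∪ A.1))) := by
          rw [Set.disjoint_left]
          rintro e rfl ⟨u, w, heq, _, hu, hw⟩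
          rcases Sym2.eq_iff.1 heq with ⟨h1, h2⟩ | ⟨h1, h2⟩
          · exact hu.2 (Or.inr (h1 ▸ hcond.1))
          · exact hw.2 (Or.inr (h1 ▸ hcond.1))
        have hd₁₂ : Disjoint (sym2Touch G (S x \ W) A.1) ({s(d.1.1, d.1.2)} : Set (Sym2 V)) := by
          rw [Set.disjoint_right]
          rintro e rfl ⟨u, w, heq, _, hu, hw, _⟩
          rcases Sym2.eq_iff.1 heq with ⟨h1, h2⟩ | ⟨h1, h2⟩
          · exact d.2.2.2 (h2 ▸ hw.1)
          · exact d.2.2.2 (h2 ▸ hu.1)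
        have hd₁₃ : Disjoint (sym2Touch G (S x \ W) A.1)
            (sym2Over G (Uset G S n d.1.2 \ (W ∪ A.1))) := by
          rw [Set.disjoint_left]
          rintro e ⟨u, w, heq, _, hu, hw, huA⟩ ⟨u', w', heq', _, hu', hw'⟩
          rw [heq] at heq'
          rcases Sym2.eq_iff.1 heq' with ⟨h1, h2⟩ | ⟨h1, h2⟩
          · exact hu'.2 (Or.inr (h1 ▸ huA))
          · exact hw'.2 (Or.inr (h1 ▸ huA))
        have hsub₁ : sym2Touch G (S x \ W) A.1 ⊆ G.edgeSet :=
          fun e he => sym2Over_subset_edgeSet G (sym2Touch_subset_over G he)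
        have hsub₂ : ({s(d.1.1, d.1.2)} : Set (Sym2 V)) ⊆ G.edgeSet := by
          rintro e rfl
          exact d.2.1
        have hsub₃ : sym2Over G (Uset G S n d.1.2 \ (W ∪ A.1)) ⊆ G.edgeSet :=
          sym2Over_subset_edgeSet G
        have h23 : P ({ω : Sym2 V → Bool | ω s(d.1.1, d.1.2) = true} ∩
            VC G S n d.1.2 (W ∪ A.1)) =
            P {ω : Sym2 V → Bool | ω s(d.1.1, d.1.2) = true} * P (VC G S n d.1.2 (W ∪ A.1)) :=
          indep2' hP hF₂ hF₃ (det_edge _) (det_VC n d.1.2 (W ∪ A.1)) hd₂₃ hsub₂ hsub₃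
        have h123 : P (Ev d A) = P {ω | Cl G (S x \ W) ω x = A.1} *
            (P {ω : Sym2 V → Bool | ω s(d.1.1, d.1.2) = true} * P (VC G S n d.1.2 (W ∪ A.1))) := by
          rw [hEvEq, indep2' hP hF₁ (hF₂.union hF₃) (det_ClEq G)
            ((det_edge _).inter (det_VC n d.1.2 (W ∪ A.1)))
            (Set.disjoint_union_right.2 ⟨hd₁₂, hd₁₃⟩) hsub₁
            (Set.union_subset hsub₂ hsub₃), h23]
        rw [h123, hClEq, hK]
        apply mul_le_mul_right
        rw [P_edge hP (by exact d.2.1)]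
        exact mul_le_mul_right (ih d.1.2 (W ∪ A.1) (fun h => h.elim hcond.2.2 hcond.2.1)) _
      · have : Ev d A = ∅ := by simp only [hEv, Set.iUnion_eq_if, if_neg hcond]
        rw [this]
        simp
    -- the cluster-partition bound
    have hpart : ∀ d : {d : V × V // G.Adj d.1 d.2 ∧ d.1 ∈ S x ∧ d.2 ∉ S x},
        ∑' A : {A : Set V // A ⊆ S x \ W}, P (ClE d A) ≤
          P {ω | (openIn G (S x) ω).Reachable x d.1.1} := by
      intro d
      have hmeas : ∀ A : {A : Set V // A ⊆ S x \ W}, MeasurableSet (ClE d A) := by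
        intro A
        by_cases hcond : d.1.1 ∈ A.1 ∧ d.1.2 ∉ A.1 ∧ d.1.2 ∉ W
        · rw [show ClE d A = {ω | Cl G (S x \ W) ω x = A.1} by
            simp only [hClE, Set.iUnion_eq_if, if_pos hcond]]
          exact measurableSet_of_determined (sym2Touch_finite G ((hSfin x).diff)) (det_ClEq G)
        · rw [show ClE d A = ∅ by simp only [hClE, Set.iUnion_eq_if, if_neg hcond]]
          exact MeasurableSet.empty
      have hdisj : Pairwise (Function.onFun Disjoint (ClE d)) := by
        intro A A' hne
        simp only [Function.onFun]
        rw [Set.disjoint_left]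
        intro ω hω hω'
        obtain ⟨_, h1⟩ := Set.mem_iUnion.1 hω
        obtain ⟨_, h2⟩ := Set.mem_iUnion.1 hω'
        exact hne (Subtype.ext ((h1.symm.trans h2 : A.1 = A'.1)))
      rw [← measure_iUnion hdisj hmeas]
      apply measure_mono
      intro ω hω
      obtain ⟨A, hA⟩ := Set.mem_iUnion.1 hω
      obtain ⟨hcond, hCl⟩ := Set.mem_iUnion.1 hA
      have : d.1.1 ∈ Cl G (S x \ W) ω x := hCl ▸ hcond.1
      exact this.mono (openIn_mono G Set.diff_subset ω)
    -- put everything together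
    calc P (VC G S (n+1) x W) ≤ P (⋃ d, ⋃ A, Ev d A) := measure_mono hsub
      _ ≤ ∑' d, P (⋃ A, Ev d A) := measure_iUnion_le _
      _ ≤ ∑' d, ∑' A, P (Ev d A) := ENNReal.tsum_le_tsum (fun d => measure_iUnion_le _)
      _ ≤ ∑' d, ∑' A, P (ClE d A) * K :=
          ENNReal.tsum_le_tsum (fun d => ENNReal.tsum_le_tsum (fun A => hterm d A))
      _ = ∑' d, (∑' A, P (ClE d A)) * K := by
          exact tsum_congr (fun d => ENNReal.tsum_mul_right)
      _ ≤ ∑' d, P {ω | (openIn G (S x) ω).Reachable x d.1.1} * K :=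
          ENNReal.tsum_le_tsum (fun d => mul_le_mul_left (hpart d) K)
      _ = (∑' d : {d : V × V // G.Adj d.1 d.2 ∧ d.1 ∈ S x ∧ d.2 ∉ S x},
            P {ω | (openIn G (S x) ω).Reachable x d.1.1}) * K := ENNReal.tsum_mul_right
      _ = (ENNReal.ofReal c) ^ n * (ENNReal.ofReal p *
            ∑' d : {d : V × V // G.Adj d.1 d.2 ∧ d.1 ∈ S x ∧ d.2 ∉ S x},
              P {ω | (openIn G (S x) ω).Reachable x d.1.1}) := by rw [hK]; ring
      _ ≤ (ENNReal.ofReal c) ^ n * ENNReal.ofReal c := mul_le_mul_right (hphi x) _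
      _ = (ENNReal.ofReal c) ^ (n + 1) := by rw [pow_succ]

end Probabilistic


/-- If every vertex `x` of a graph with degrees bounded by `D` admits a finite
connected witness set `S_x ∋ x` with `φ_p^x(S_x) ≤ c < 1`, then Bernoulli(`p`) percolation
almost surely has no infinite cluster. -/
theorem no_infinite_cluster_of_phi_witnesses
    {V : Type*} (G : SimpleGraph V) (D : ℕ) (hD : DegLE G D)
    (p : ℝ) (hp0 : 0 ≤ p) (hp1 : p ≤ 1) (c : ℝ) (hc : c < 1)
    (P : Measure (Sym2 V → Bool)) (hP : IsBernoulli G p P)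
    (hwit : ∀ x : V, ∃ S : Set V, S.Finite ∧ (G.induce S).Connected ∧ x ∈ S ∧
      phi G P p x S ≤ ENNReal.ofReal c)
    (v : V) :
    P {ω | (cluster G ω v).Infinite} = 0 := by
  classical
  choose S hSfin _hconn hSmem hphi using hwit
  -- the infinite-cluster event is contained in every exploration event
  have hsub : ∀ n : ℕ, {ω | (cluster G ω v).Infinite} ⊆ VC G S n v ∅ := by
    intro n ω hω
    apply det_main hD hSfin hSmem n v ∅ (Set.notMem_empty v)
    apply Set.Infinite.mono ?_ hω
    intro y hy
    apply SimpleGraph.Reachable.mono ?_ hy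
    intro a b hab
    exact ⟨hab.1, Set.mem_compl (Set.notMem_empty a), Set.mem_compl (Set.notMem_empty b),
      hab.2⟩
  have hbound : ∀ n : ℕ, P {ω | (cluster G ω v).Infinite} ≤ (ENNReal.ofReal c) ^ n := by
    intro n
    exact le_trans (measure_mono (hsub n))
      (P_VC hD hSfin hSmem hP hphi n v ∅ (Set.notMem_empty v))
  have hlim : Filter.Tendsto (fun n : ℕ => (ENNReal.ofReal c) ^ n) Filter.atTop (nhds 0) :=
    ENNReal.tendsto_pow_atTop_nhds_zero_of_lt_one (ENNReal.ofReal_lt_one.2 hc)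
  have : P {ω | (cluster G ω v).Infinite} ≤ 0 := ge_of_tendsto' hlim hbound
  exact le_antisymm this (by simp)


end PercolationPaper
end

section
/- Let G be a connected locally finite graph and let o be a vertex such that |B_G(o,r)|^{1/r} → 1 as r → ∞ (subexponential volume growth). Let p ∈ [0,1] and suppose there exist c < 1 and R ∈ ℕ such that φ_p^o(B_G(o,r)) ≤ c^r for every r ≥ R. Then the expected cluster size of o in Bernoulli(p) percolation on G is finite: E_p|C_o| < ∞. -/
open MeasureTheory ENNReal

namespace PercolationPaper

variable {V : Type*}

/-- Walks between two fixed vertices of a locally finite graph form a countable type. -/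
lemma countable_walk (G : SimpleGraph V) (hlf : ∀ v : V, (G.neighborSet v).Finite)
    (u v : V) : Countable (G.Walk u v) := by
  classical
  letI : G.LocallyFinite := fun w => (hlf w).fintype
  have : ∀ n : ℕ, Countable {p : G.Walk u v // p.length = n} := fun n =>
    Finite.to_countable
  exact Countable.of_equiv (Σ n, {p : G.Walk u v // p.length = n})
    { toFun := fun q => q.2.1
      invFun := fun w => ⟨w.length, w, rfl⟩
      left_inv := by rintro ⟨n, w, rfl⟩; rfl
      right_inv := fun w => rfl }

lemma reachable_openSG_iff {G : SimpleGraph V} {ω : Sym2 V → Bool} {u v : V} :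
    (openSG G ω).Reachable u v ↔ ∃ w : G.Walk u v, ∀ e ∈ w.edges, ω e = true := by
  constructor
  · rintro ⟨w⟩
    induction w with
    | nil => exact ⟨.nil, by simp⟩
    | cons h p ih =>
      obtain ⟨w', hw'⟩ := ih
      refine ⟨.cons h.1 w', ?_⟩
      intro e he
      rw [SimpleGraph.Walk.edges_cons, List.mem_cons] at he
      rcases he with rfl | he
      · exact h.2
      · exact hw' e he
  · rintro ⟨w, hw⟩
    refine ⟨w.transfer (openSG G ω) ?_⟩
    intro e he
    have h1 : e ∈ G.edgeSet := w.edges_subset_edgeSet he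
    induction e with
    | h a b => exact ⟨h1, hw _ he⟩

lemma measurable_reach (G : SimpleGraph V) (hlf : ∀ v : V, (G.neighborSet v).Finite)
    (o x : V) :
    MeasurableSet {ω : Sym2 V → Bool | (openSG G ω).Reachable o x} := by
  haveI := countable_walk G hlf o x
  have h : {ω : Sym2 V → Bool | (openSG G ω).Reachable o x} =
      ⋃ w : G.Walk o x, ⋂ e ∈ {e | e ∈ w.edges}, {ω : Sym2 V → Bool | ω e = true} := by
    ext ω
    simp only [Set.mem_setOf_eq, Set.mem_iUnion, Set.mem_iInter, reachable_openSG_iff]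
  rw [h]
  refine MeasurableSet.iUnion fun w => MeasurableSet.biInter (w.edges.finite_toSet.countable)
    fun e _ => ?_
  have he : {ω : Sym2 V → Bool | ω e = true} = (fun ω : Sym2 V → Bool => ω e) ⁻¹' {true} := rfl
  rw [he]
  exact (measurable_pi_apply e) (measurableSet_singleton _)

lemma coe_encard_eq {α : Type*} {s : Set α} (hs : s.Finite) :
    ((s.encard : ℝ≥0∞)) = (s.ncard : ℝ≥0∞) := by
  have h1 : s.encard = (s.ncard : ℕ∞) := by
    rw [hs.encard_eq_coe_toFinset_card, Set.ncard_eq_toFinset_card _ hs]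
  rw [h1, ENat.toENNReal_coe]

/-- Exit lemma: an open walk from inside `S` to outside `S` must cross an open boundary
edge, after reaching its inner endpoint inside `S`. -/
lemma exit_lemma {G : SimpleGraph V} {ω : Sym2 V → Bool} {S : Set V} {o : V} :
    ∀ {y z : V}, (openSG G ω).Walk y z → y ∈ S → z ∉ S →
      (openIn G S ω).Reachable o y →
      ∃ d : {d : V × V // G.Adj d.1 d.2 ∧ d.1 ∈ S ∧ d.2 ∉ S},
        (openIn G S ω).Reachable o d.1.1 := by
  intro y z w
  induction w with
  | nil => intro hy hz _; exact absurd hy hz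
  | @cons a b _ h p ih =>
    intro hy hz hr
    by_cases hb : b ∈ S
    · exact ih hb hz (hr.trans (SimpleGraph.Adj.reachable ⟨h.1, hy, hb, h.2⟩))
    · exact ⟨⟨(a, b), h.1, hy, hb⟩, hr⟩

/-- subexponential volume growth plus exponential decay of `φ_p` on balls
implies finite expected cluster size. -/
theorem expCluster_lt_top_of_subexp_growth_and_phi_decay
    {V : Type*} (G : SimpleGraph V) (hconn : G.Connected)
    (hlf : ∀ v : V, (G.neighborSet v).Finite) (o : V)
    (hballfin : ∀ r : ℕ, (gball G o r).Finite)
    (hgrowth : ∀ a : ℝ, 1 < a → ∃ R : ℕ, ∀ r : ℕ, R ≤ r →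
      ((gball G o r).ncard : ℝ) ≤ a ^ r)
    (p : ℝ) (hp0 : 0 ≤ p) (hp1 : p ≤ 1)
    (c : ℝ) (hc : c < 1) (R : ℕ)
    (P : Measure (Sym2 V → Bool)) (hP : IsBernoulli G p P)
    (hphi : ∀ r : ℕ, R ≤ r → phi G P p o (gball G o r) ≤ ENNReal.ofReal (c ^ r)) :
    expCluster G P o < ⊤ := by
  classical
  obtain ⟨hprob, hber⟩ := hP
  haveI : IsProbabilityMeasure P := hprob
  haveI hV : Countable V := by
    rw [← Set.countable_univ_iff]
    have hsub : (Set.univ : Set V) ⊆ ⋃ r : ℕ, gball G o r := by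
      intro x _
      obtain ⟨w⟩ := hconn.preconnected o x
      exact Set.mem_iUnion.2 ⟨w.length, w, le_rfl⟩
    exact ((Set.countable_iUnion fun r => (hballfin r).countable).mono hsub)
  have hmeas : ∀ x : V, MeasurableSet {ω : Sym2 V → Bool | (openSG G ω).Reachable o x} :=
    fun x => measurable_reach G hlf o x
  -- Step 1: rewrite the expected cluster size as a sum of connection probabilities
  have hexp : expCluster G P o = ∑' x : V, P {ω | (openSG G ω).Reachable o x} := by
    have hpt : ∀ ω : Sym2 V → Bool, ((cluster G ω o).encard : ℝ≥0∞) =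
        ∑' x : V, Set.indicator {ω' : Sym2 V → Bool | (openSG G ω').Reachable o x}
          (fun _ => (1 : ℝ≥0∞)) ω := by
      intro ω
      calc ((cluster G ω o).encard : ℝ≥0∞)
          = ∑' (_ : cluster G ω o), (1 : ℝ≥0∞) := (ENNReal.tsum_set_one _).symm
        _ = ∑' x : V, (cluster G ω o).indicator (fun _ => (1 : ℝ≥0∞)) x :=
            tsum_subtype (cluster G ω o) (fun _ => (1 : ℝ≥0∞))
        _ = ∑' x : V, Set.indicator {ω' : Sym2 V → Bool | (openSG G ω').Reachable o x}
              (fun _ => (1 : ℝ≥0∞)) ω := by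
            refine tsum_congr fun x => ?_
            by_cases h : (openSG G ω).Reachable o x
            · simp [cluster, Set.indicator, h]
            · simp [cluster, Set.indicator, h]
    rw [expCluster]
    calc ∫⁻ ω, ((cluster G ω o).encard : ℝ≥0∞) ∂P
        = ∫⁻ ω, ∑' x : V, Set.indicator {ω' : Sym2 V → Bool | (openSG G ω').Reachable o x}
            (fun _ => (1 : ℝ≥0∞)) ω ∂P := lintegral_congr hpt
      _ = ∑' x : V, ∫⁻ ω, Set.indicator {ω' : Sym2 V → Bool | (openSG G ω').Reachable o x}
            (fun _ => (1 : ℝ≥0∞)) ω ∂P :=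
          lintegral_tsum fun x => (measurable_const.indicator (hmeas x)).aemeasurable
      _ = ∑' x : V, P {ω | (openSG G ω).Reachable o x} :=
          tsum_congr fun x => lintegral_indicator_one (hmeas x)
  rw [hexp, lt_top_iff_ne_top]
  set f : V → ℝ≥0∞ := fun x => P {ω | (openSG G ω).Reachable o x} with hfdef
  have hf1 : ∀ x, f x ≤ 1 := fun x => prob_le_one
  have homem : ∀ r : ℕ, o ∈ gball G o r := fun r => ⟨SimpleGraph.Walk.nil, by simp⟩
  have hmono : ∀ {m m' : ℕ}, m ≤ m' → gball G o m ⊆ gball G o m' := by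
    rintro m m' h x ⟨w, hw⟩; exact ⟨w, hw.trans h⟩
  -- Step 2: key inequality via the exit lemma
  have key : ∀ r : ℕ, R ≤ r → ∀ x : V, x ∉ gball G o r →
      ENNReal.ofReal p * f x ≤ ENNReal.ofReal (c ^ r) := by
    intro r hr x hx
    set S := gball G o r with hS
    have hle : f x ≤ ∑' d : {d : V × V // G.Adj d.1 d.2 ∧ d.1 ∈ S ∧ d.2 ∉ S},
        P {ω | (openIn G S ω).Reachable o d.1.1} := by
      refine le_trans (measure_mono ?_) (measure_iUnion_le _)
      intro ω hω
      obtain ⟨w⟩ := hω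
      obtain ⟨d, hd⟩ := exit_lemma w (homem r) hx (SimpleGraph.Reachable.refl o)
      exact Set.mem_iUnion.2 ⟨d, hd⟩
    calc ENNReal.ofReal p * f x
        ≤ phi G P p o S := by unfold phi; exact mul_le_mul_right hle _
      _ ≤ ENNReal.ofReal (c ^ r) := hphi r hr
  by_cases hp : p = 0
  -- CASE p = 0 : every edge is a.s. closed, so the cluster is a.s. {o}
  · subst hp
    have hzero : ∀ x : V, x ≠ o → f x = 0 := by
      intro x hxo
      have hsub : {ω : Sym2 V → Bool | (openSG G ω).Reachable o x} ⊆
          ⋃ e : G.edgeSet, {ω : Sym2 V → Bool | ω (e : Sym2 V) = true} := by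
        intro ω hω
        obtain ⟨w⟩ := hω
        cases w with
        | nil => exact absurd rfl hxo.symm
        | cons h pw =>
          exact Set.mem_iUnion.2 ⟨⟨_, (SimpleGraph.mem_edgeSet G).2 h.1⟩, h.2⟩
      have hnull : ∀ e : G.edgeSet, P {ω : Sym2 V → Bool | ω (e : Sym2 V) = true} = 0 := by
        rintro ⟨e, he⟩
        have h1 := hber {e} (by simpa using he) (fun _ => true)
        simpa using h1
      refine le_antisymm ?_ zero_le
      calc f x ≤ P (⋃ e : G.edgeSet, {ω : Sym2 V → Bool | ω (e : Sym2 V) = true}) :=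
            measure_mono hsub
        _ ≤ ∑' e : G.edgeSet, P {ω : Sym2 V → Bool | ω (e : Sym2 V) = true} :=
            measure_iUnion_le _
        _ = 0 := by simp [hnull]
    have hle : ∑' x : V, f x ≤ ∑' x : V, ({o} : Set V).indicator (fun _ => (1 : ℝ≥0∞)) x := by
      refine ENNReal.tsum_le_tsum fun x => ?_
      by_cases hxo : x = o
      · rw [Set.indicator_of_mem (Set.mem_singleton_iff.2 hxo)]; exact hf1 x
      · rw [hzero x hxo]; exact zero_le
    refine ne_top_of_le_ne_top ?_ hle
    rw [← tsum_subtype, ENNReal.tsum_set_one, Set.encard_singleton,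
      ENat.toENNReal_one]
    exact one_ne_top
  -- CASE p > 0
  · have hppos : 0 < p := lt_of_le_of_ne hp0 (Ne.symm hp)
    have hpne : ENNReal.ofReal p ≠ 0 := (ENNReal.ofReal_pos.2 hppos).ne'
    have hptop : ENNReal.ofReal p ≠ ⊤ := ENNReal.ofReal_ne_top
    have key2 : ∀ r : ℕ, R ≤ r → ∀ x : V, x ∉ gball G o r →
        f x ≤ ENNReal.ofReal (c ^ r) / ENNReal.ofReal p := by
      intro r hr x hx
      rw [ENNReal.le_div_iff_mul_le (Or.inl hpne) (Or.inl hptop), mul_comm]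
      exact key r hr x hx
    by_cases hc0 : c ≤ 0
    -- SUBCASE c ≤ 0 : there is r₀ ≥ R with c ^ r₀ ≤ 0, whence the cluster is confined
    · obtain ⟨r₀, hr₀R, hr₀⟩ : ∃ r₀ : ℕ, R ≤ r₀ ∧ c ^ r₀ ≤ 0 := by
        rcases hc0.lt_or_eq with hlt | heq
        · exact ⟨2 * R + 1, by omega, le_of_lt (Odd.pow_neg ⟨R, by ring⟩ hlt)⟩
        · exact ⟨R + 1, by omega, le_of_eq (by rw [heq, zero_pow (by omega : R + 1 ≠ 0)])⟩
      have hzero : ∀ x : V, x ∉ gball G o r₀ → f x = 0 := by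
        intro x hx
        have h1 := key2 r₀ hr₀R x hx
        rw [ENNReal.ofReal_eq_zero.2 hr₀] at h1
        simpa using h1
      have hle : ∑' x : V, f x ≤
          ∑' x : V, (gball G o r₀).indicator (fun _ => (1 : ℝ≥0∞)) x := by
        refine ENNReal.tsum_le_tsum fun x => ?_
        by_cases hx : x ∈ gball G o r₀
        · rw [Set.indicator_of_mem hx]; exact hf1 x
        · rw [hzero x hx]; exact zero_le
      refine ne_top_of_le_ne_top ?_ hle
      rw [← tsum_subtype, ENNReal.tsum_set_one, coe_encard_eq (hballfin r₀)]
      exact ENNReal.natCast_ne_top _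
    -- SUBCASE 0 < c < 1 : geometric series argument
    · push_neg at hc0
      have hcne : c ≠ 0 := ne_of_gt hc0
      obtain ⟨a, ha1, hac, hac0⟩ : ∃ a : ℝ, 1 < a ∧ a * c < 1 ∧ 0 ≤ a * c := by
        refine ⟨(1 + c⁻¹) / 2, ?_, ?_, ?_⟩
        · have hinv : 1 < c⁻¹ := (one_lt_inv₀ hc0).2 hc
          linarith
        · have hval : (1 + c⁻¹) / 2 * c = (c + 1) / 2 := by field_simp
          rw [hval]; linarith
        · have hinv : 1 < c⁻¹ := (one_lt_inv₀ hc0).2 hc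
          positivity
      have hapos : 0 < a := lt_trans one_pos ha1
      obtain ⟨R₁, hR₁⟩ := hgrowth a ha1
      set N : ℕ := max R R₁ with hNdef
      set A : ℕ → Set V := fun m => gball G o (m + 1) \ gball G o m with hAdef
      set q : ℝ≥0∞ := ENNReal.ofReal (a * c) with hqdef
      set K : ℝ := a ^ (N + 1) * c ^ N with hKdef
      have hK0 : 0 ≤ K := by positivity
      -- pointwise domination
      have hptw : ∀ x : V, f x ≤ (gball G o N).indicator (fun _ => (1 : ℝ≥0∞)) x +
          ∑' r : ℕ, (A (N + r)).indicator
            (fun _ => ENNReal.ofReal (c ^ (N + r)) / ENNReal.ofReal p) x := by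
        intro x
        by_cases hxB : x ∈ gball G o N
        · rw [Set.indicator_of_mem hxB]
          exact le_trans (hf1 x) le_self_add
        · have hex : ∃ m, x ∈ gball G o m := by
            obtain ⟨w⟩ := hconn.preconnected o x
            exact ⟨w.length, w, le_rfl⟩
          have hNm : N < Nat.find hex := by
            by_contra h
            push_neg at h
            exact hxB (hmono h (Nat.find_spec hex))
          obtain ⟨r, hr⟩ : ∃ r, Nat.find hex = N + r + 1 := ⟨Nat.find hex - N - 1, by omega⟩
          have hxnot : x ∉ gball G o (N + r) := by
            intro hmem
            exact Nat.find_min hex (by omega) hmem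
          have hxA : x ∈ A (N + r) := by
            refine ⟨?_, hxnot⟩
            have := Nat.find_spec hex
            rwa [hr] at this
          have hbound : f x ≤ ENNReal.ofReal (c ^ (N + r)) / ENNReal.ofReal p :=
            key2 (N + r) (le_trans (le_max_left R R₁) (Nat.le_add_right N r)) x hxnot
          calc f x ≤ (A (N + r)).indicator
                (fun _ => ENNReal.ofReal (c ^ (N + r)) / ENNReal.ofReal p) x := by
                rw [Set.indicator_of_mem hxA]; exact hbound
            _ ≤ ∑' r' : ℕ, (A (N + r')).indicator
                (fun _ => ENNReal.ofReal (c ^ (N + r')) / ENNReal.ofReal p) x :=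
                ENNReal.le_tsum r
            _ ≤ _ := le_add_self
      -- summing the pointwise bound
      have hsum1 : ∑' x : V, (gball G o N).indicator (fun _ => (1 : ℝ≥0∞)) x ≠ ⊤ := by
        rw [← tsum_subtype, ENNReal.tsum_set_one, coe_encard_eq (hballfin N)]
        exact ENNReal.natCast_ne_top _
      -- the shell sums
      have hshell : ∀ r : ℕ,
          ∑' x : V, (A (N + r)).indicator
            (fun _ => ENNReal.ofReal (c ^ (N + r)) / ENNReal.ofReal p) x
          ≤ (ENNReal.ofReal K / ENNReal.ofReal p) * q ^ r := by
        intro r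
        rw [← tsum_subtype, ENNReal.tsum_set_const]
        have hcard : ((A (N + r)).encard : ℝ≥0∞) ≤ ENNReal.ofReal (a ^ (N + r + 1)) := by
          have hfin : (A (N + r)).Finite := (hballfin (N + r + 1)).subset Set.diff_subset
          have hsub : (A (N + r)).encard ≤ (gball G o (N + r + 1)).encard :=
            Set.encard_mono Set.diff_subset
          have h1 : ((gball G o (N + r + 1)).encard : ℝ≥0∞)
              = ((gball G o (N + r + 1)).ncard : ℝ≥0∞) :=
            coe_encard_eq (hballfin (N + r + 1))
          calc ((A (N + r)).encard : ℝ≥0∞) ≤ ((gball G o (N + r + 1)).encard : ℝ≥0∞) :=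
                ENat.toENNReal_le.2 hsub
            _ = ((gball G o (N + r + 1)).ncard : ℝ≥0∞) := h1
            _ ≤ ENNReal.ofReal (a ^ (N + r + 1)) := by
                rw [← ENNReal.ofReal_natCast]
                exact ENNReal.ofReal_le_ofReal
                  (hR₁ (N + r + 1) (le_trans (le_max_right R R₁) (by omega)))
        calc (A (N + r)).encard * (ENNReal.ofReal (c ^ (N + r)) / ENNReal.ofReal p)
            ≤ ENNReal.ofReal (a ^ (N + r + 1)) *
                (ENNReal.ofReal (c ^ (N + r)) / ENNReal.ofReal p) :=
              mul_le_mul_left hcard _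
          _ = (ENNReal.ofReal K / ENNReal.ofReal p) * q ^ r := by
              have harith : a ^ (N + r + 1) * c ^ (N + r) = K * (a * c) ^ r := by
                rw [hKdef]; ring
              have h2 : ENNReal.ofReal (a ^ (N + r + 1)) * ENNReal.ofReal (c ^ (N + r))
                  = ENNReal.ofReal K * q ^ r := by
                rw [hqdef, ← ENNReal.ofReal_pow hac0,
                  ← ENNReal.ofReal_mul (by positivity : (0:ℝ) ≤ a ^ (N + r + 1)),
                  ← ENNReal.ofReal_mul hK0, harith]
              rw [← mul_div_assoc, h2, div_eq_mul_inv, div_eq_mul_inv]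
              ring
      have hq1 : q < 1 := by rw [hqdef]; exact ENNReal.ofReal_lt_one.2 hac
      have hgeom : ∑' r : ℕ, (ENNReal.ofReal K / ENNReal.ofReal p) * q ^ r ≠ ⊤ := by
        rw [ENNReal.tsum_mul_left, ENNReal.tsum_geometric]
        refine ENNReal.mul_ne_top ?_ ?_
        · exact (ENNReal.div_lt_top ENNReal.ofReal_ne_top hpne).ne
        · rw [Ne, ENNReal.inv_eq_top]
          exact fun h0 => absurd (tsub_eq_zero_iff_le.1 h0) (not_le.2 hq1)
      -- final assembly
      have hfinal : ∑' x : V, f x ≤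
          (∑' x : V, (gball G o N).indicator (fun _ => (1 : ℝ≥0∞)) x) +
          ∑' r : ℕ, ∑' x : V, (A (N + r)).indicator
            (fun _ => ENNReal.ofReal (c ^ (N + r)) / ENNReal.ofReal p) x := by
        calc ∑' x : V, f x
            ≤ ∑' x : V, ((gball G o N).indicator (fun _ => (1 : ℝ≥0∞)) x +
                ∑' r : ℕ, (A (N + r)).indicator
                  (fun _ => ENNReal.ofReal (c ^ (N + r)) / ENNReal.ofReal p) x) :=
              ENNReal.tsum_le_tsum hptw
          _ = (∑' x : V, (gball G o N).indicator (fun _ => (1 : ℝ≥0∞)) x) +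
              ∑' x : V, ∑' r : ℕ, (A (N + r)).indicator
                (fun _ => ENNReal.ofReal (c ^ (N + r)) / ENNReal.ofReal p) x :=
              ENNReal.tsum_add
          _ = _ := by rw [ENNReal.tsum_comm]
      refine ne_top_of_le_ne_top ?_ hfinal
      refine ENNReal.add_ne_top.2 ⟨hsum1, ?_⟩
      exact ne_top_of_le_ne_top hgeom (ENNReal.tsum_le_tsum hshell)

end PercolationPaper
end

section
/- Let G be a locally finite graph, let r ∈ ℕ, p ∈ (0,1), and c < 1. Suppose that for every vertex x of G the subgraph induced on the ball B_G(x, r+1) is a tree, and that |B_G(x, r+1)| · p^{r+1} ≤ c for every vertex x. Then Bernoulli(p) bond percolation on G almost surely has no infinite cluster. -/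
open MeasureTheory ENNReal

namespace PercolationPaper

variable {V : Type*}

section Aux

open SimpleGraph Walk

variable {G : SimpleGraph V}


@[simp] lemma nil_getVert {u : V} (i : ℕ) : (Walk.nil : G.Walk u u).getVert i = u := rfl

/-- A walk (with its endpoint) is determined by its length and vertex sequence. -/
lemma walk_eq_of_getVert : ∀ (n : ℕ) {u x y : V} (p : G.Walk u x) (q : G.Walk u y),
    p.length = n → q.length = n → (∀ i, p.getVert i = q.getVert i) →
    (⟨x, p⟩ : Σ z : V, G.Walk u z) = ⟨y, q⟩ := by
  intro n
  induction n with
  | zero =>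
    intro u x y p q hp hq _
    cases p with
    | nil =>
      cases q with
      | nil => rfl
      | cons h q => simp at hq
    | cons h p => simp at hp
  | succ n ih =>
    intro u x y p q hp hq hiv
    cases p with
    | nil => simp at hp
    | cons h p' =>
      rename_i w
      cases q with
      | nil => simp at hq
      | cons h' q' =>
        rename_i w'
        have hw : w = w' := by simpa [Walk.getVert_cons_succ, Walk.getVert_zero] using hiv 1
        subst hw
        have h2 := ih p' q' (by simpa using hp) (by simpa using hq)
          (fun i => by simpa [Walk.getVert_cons_succ] using hiv (i + 1))
        obtain ⟨rfl, h3⟩ := Sigma.mk.inj_iff.mp h2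
        rw [eq_of_heq h3]

/-- Prefix of a walk. -/
def takeW : ∀ {u x : V} (p : G.Walk u x) (n : ℕ), G.Walk u (p.getVert n)
  | _, _, .nil, _ => .nil
  | _, _, .cons h _, 0 => .nil
  | _, _, .cons h p', (n+1) => .cons h (takeW p' n)

lemma takeW_length : ∀ {u x : V} (p : G.Walk u x) (n : ℕ), (takeW p n).length = min n p.length
  | _, _, .nil, n => by simp [takeW]
  | _, _, .cons h p', 0 => by simp [takeW]; rfl
  | _, _, .cons h p', (n+1) => by
      show (Walk.cons h (takeW p' n)).length = _
      rw [Walk.length_cons, takeW_length p' n, Walk.length_cons, Nat.succ_min_succ]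

lemma takeW_getVert : ∀ {u x : V} (p : G.Walk u x) (n i : ℕ),
    (takeW p n).getVert i = p.getVert (min i n)
  | _, _, .nil, n, i => by simp [takeW]
  | _, _, .cons h p', 0, i => by
      show (Walk.nil).getVert i = (Walk.cons h p').getVert (min i 0)
      simp [Walk.getVert_zero]
  | _, _, .cons h p', (n+1), 0 => by
      show (Walk.cons h (takeW p' n)).getVert 0 = (Walk.cons h p').getVert (min 0 (n+1))
      simp [Walk.getVert_zero]
  | _, _, .cons h p', (n+1), (i+1) => by
      show (Walk.cons h (takeW p' n)).getVert (i+1) = (Walk.cons h p').getVert (min (i+1) (n+1))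
      rw [Nat.succ_min_succ, Walk.getVert_cons_succ, Walk.getVert_cons_succ]
      exact takeW_getVert p' n i

lemma takeW_support_prefix : ∀ {u x : V} (p : G.Walk u x) (n : ℕ),
    (takeW p n).support <+: p.support
  | _, _, .nil, n => by simp [takeW]
  | u, _, .cons h p', 0 => by
      show (Walk.nil : G.Walk u u).support <+: (Walk.cons h p').support
      refine ⟨p'.support, ?_⟩
      simp
  | u, _, .cons h p', (n+1) => by
      show (Walk.cons h (takeW p' n)).support <+: (Walk.cons h p').support
      obtain ⟨t, ht⟩ := takeW_support_prefix p' n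
      exact ⟨t, by simp [ht]⟩

lemma takeW_isPath {u x : V} {p : G.Walk u x} (hp : p.IsPath) (n : ℕ) :
    (takeW p n).IsPath := by
  rw [Walk.isPath_def] at hp ⊢
  exact (takeW_support_prefix p n).sublist.nodup hp

/-- Suffix of a walk. -/
def dropW : ∀ {u x : V} (p : G.Walk u x) (n : ℕ), G.Walk (p.getVert n) x
  | _, _, .nil, _ => .nil
  | _, _, .cons h p', 0 => .cons h p'
  | _, _, .cons _ p', (n+1) => dropW p' n

lemma dropW_length : ∀ {u x : V} (p : G.Walk u x) (n : ℕ),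
    (dropW p n).length = p.length - n
  | _, _, .nil, n => by simp [dropW]
  | _, _, .cons h p', 0 => by simp [dropW]; rfl
  | _, _, .cons h p', (n+1) => by
      show (dropW p' n).length = (Walk.cons h p').length - (n+1)
      rw [dropW_length p' n, Walk.length_cons]
      omega

lemma dropW_getVert : ∀ {u x : V} (p : G.Walk u x) (n i : ℕ),
    (dropW p n).getVert i = p.getVert (n + i)
  | _, _, .nil, n, i => rfl
  | _, _, .cons h p', 0, i => by
      show (Walk.cons h p').getVert i = (Walk.cons h p').getVert (0 + i)
      rw [Nat.zero_add]
  | _, _, .cons h p', (n+1), i => by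
      show (dropW p' n).getVert i = (Walk.cons h p').getVert (n + 1 + i)
      rw [show n + 1 + i = (n + i) + 1 from by omega, Walk.getVert_cons_succ]
      exact dropW_getVert p' n i

lemma dropW_support_suffix : ∀ {u x : V} (p : G.Walk u x) (n : ℕ),
    (dropW p n).support <:+ p.support
  | _, _, .nil, n => List.suffix_rfl
  | _, _, .cons h p', 0 => List.suffix_rfl
  | _, _, .cons h p', (n+1) => by
      show (dropW p' n).support <:+ (Walk.cons h p').support
      refine (dropW_support_suffix p' n).trans ?_
      rw [Walk.support_cons]
      exact List.suffix_cons _ _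

lemma dropW_isPath {u x : V} {p : G.Walk u x} (hp : p.IsPath) (n : ℕ) :
    (dropW p n).IsPath := by
  rw [Walk.isPath_def] at hp ⊢
  exact (dropW_support_suffix p n).sublist.nodup hp

/-- Transfer a walk whose support lies in `S` to the induced subgraph on `S`. -/
def toInduce {S : Set V} : ∀ {a b : V} (w : G.Walk a b) (hs : ∀ y ∈ w.support, y ∈ S),
    (G.induce S).Walk ⟨a, hs a w.start_mem_support⟩ ⟨b, hs b w.end_mem_support⟩
  | _, _, .nil, _ => .nil
  | _, _, .cons h w', hs =>
      .cons (by exact h) (toInduce w' (fun y hy => hs y (by simp [hy])))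

lemma toInduce_getVert {S : Set V} : ∀ {a b : V} (w : G.Walk a b)
    (hs : ∀ y ∈ w.support, y ∈ S) (i : ℕ),
    ((toInduce w hs).getVert i).1 = w.getVert i
  | _, _, .nil, _, _ => rfl
  | _, _, .cons h w', hs, 0 => rfl
  | _, _, .cons h w', hs, (i+1) => by
      show ((toInduce w' _).getVert i).1 = w'.getVert i
      exact toInduce_getVert w' _ i

lemma toInduce_support {S : Set V} : ∀ {a b : V} (w : G.Walk a b)
    (hs : ∀ y ∈ w.support, y ∈ S),
    (toInduce w hs).support.map Subtype.val = w.support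
  | _, _, .nil, _ => rfl
  | _, _, .cons h w', hs => by
      show (Walk.cons _ (toInduce w' _)).support.map Subtype.val = _
      exact congrArg (List.cons _) (toInduce_support w' _)

lemma toInduce_isPath {S : Set V} {a b : V} {w : G.Walk a b} (hw : w.IsPath)
    (hs : ∀ y ∈ w.support, y ∈ S) : (toInduce w hs).IsPath := by
  rw [Walk.isPath_def] at hw ⊢
  rw [← toInduce_support w hs] at hw
  exact hw.of_map

/-- In a tree (as induced subgraph), a path between two vertices is unique;
hence its vertex sequence is determined. -/
lemma tree_segment_getVert_eq {S : Set V} (hT : (G.induce S).IsTree) {a x : V}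
    (d d' : G.Walk a x) (hd : d.IsPath) (hd' : d'.IsPath)
    (hds : ∀ y ∈ d.support, y ∈ S) (hd's : ∀ y ∈ d'.support, y ∈ S) (i : ℕ) :
    d.getVert i = d'.getVert i := by
  have h1 := hT.existsUnique_path ⟨a, hds a d.start_mem_support⟩ ⟨x, hds x d.end_mem_support⟩
  have e : toInduce d hds = toInduce d' hd's :=
    (h1.unique (toInduce_isPath hd hds) (toInduce_isPath hd' hd's))
  calc d.getVert i = ((toInduce d hds).getVert i).1 := (toInduce_getVert d hds i).symm
    _ = ((toInduce d' hd's).getVert i).1 := by rw [e]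
    _ = d'.getVert i := toInduce_getVert d' hd's i

lemma support_subset_gball {a b : V} (w : G.Walk a b) {n : ℕ} (h : w.length ≤ n) :
    ∀ y ∈ w.support, y ∈ gball G a n := by
  intro y hy
  obtain ⟨m, hm, hml⟩ := Walk.mem_support_iff_exists_getVert.mp hy
  refine ⟨(takeW w m).copy rfl hm, ?_⟩
  rw [Walk.length_copy, takeW_length]
  omega

lemma getVert_mem_gball {a b : V} (w : G.Walk a b) {i n : ℕ} (h : i ≤ n) :
    w.getVert i ∈ gball G a n :=
  ⟨takeW w i, by rw [takeW_length]; omega⟩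

lemma gball_finite (hlf : ∀ v : V, (G.neighborSet v).Finite) (v : V) :
    ∀ n : ℕ, (gball G v n).Finite
  | 0 => Set.Finite.subset (Set.finite_singleton v) (by
      rintro x ⟨w, hw⟩
      have h0 : w.length = 0 := Nat.le_zero.mp hw
      exact Set.mem_singleton_iff.mpr (Walk.eq_of_length_eq_zero h0).symm)
  | (n+1) => by
      have hn := gball_finite hlf v n
      refine Set.Finite.subset (hn.union (hn.biUnion (fun y _ => hlf y))) ?_
      rintro x ⟨w, hw⟩
      rcases Nat.lt_or_ge w.length (n+1) with h | h
      · exact Or.inl ⟨w, by omega⟩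
      · have hlen : w.length = n + 1 := le_antisymm hw h
        refine Or.inr (Set.mem_biUnion (getVert_mem_gball w (le_refl n)) ?_)
        have hadj := w.adj_getVert_succ (by omega : n < w.length)
        rw [show w.getVert (n+1) = x from by rw [← hlen]; exact w.getVert_length] at hadj
        exact hadj

/-- The set of paths from `v` of length `n`, together with their endpoints. -/
def pathsFrom (G : SimpleGraph V) (v : V) (n : ℕ) : Set (Σ x : V, G.Walk v x) :=
  {q | q.2.IsPath ∧ q.2.length = n}

lemma pathsFrom_finite (hlf : ∀ v : V, (G.neighborSet v).Finite) (v : V) (n : ℕ) :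
    (pathsFrom G v n).Finite := by
  classical
  have hb := gball_finite hlf v n
  have hpi : Set.Finite {f : Fin (n+1) → V | ∀ i, f i ∈ gball G v n} := by
    refine (Set.Finite.pi (fun _ : Fin (n+1) => hb)).subset ?_
    intro f hf
    exact fun i _ => hf i
  refine Set.Finite.of_finite_image (hpi.subset ?_)
    (f := fun q (i : Fin (n+1)) => q.2.getVert i) ?_
  · rintro f ⟨q, ⟨hq1, hq2⟩, rfl⟩ i
    exact getVert_mem_gball q.2 (by omega : (i : ℕ) ≤ n)
  · rintro q ⟨hq1, hq2⟩ q' ⟨hq1', hq2'⟩ hf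
    have key : ∀ i : ℕ, q.2.getVert i = q'.2.getVert i := by
      intro i
      rcases Nat.lt_or_ge i (n+1) with h | h
      · exact congrFun hf ⟨i, h⟩
      · rw [Walk.getVert_of_length_le q.2 (by omega), Walk.getVert_of_length_le q'.2 (by omega)]
        have e1 : q.2.getVert n = q.1 := Walk.getVert_of_length_le q.2 (le_of_eq hq2)
        have e2 : q'.2.getVert n = q'.1 := Walk.getVert_of_length_le q'.2 (le_of_eq hq2')
        rw [← e1, ← e2]
        exact congrFun hf ⟨n, by omega⟩
    exact walk_eq_of_getVert n q.2 q'.2 hq2 hq2' key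

lemma pathsFrom_zero_ncard (v : V) : (pathsFrom G v 0).ncard ≤ 1 := by
  have hsub : pathsFrom G v 0 ⊆ {⟨v, Walk.nil⟩} := by
    rintro ⟨x, w⟩ ⟨hp, hl⟩
    cases w with
    | nil => rfl
    | cons h w' => simp at hl
  exact le_trans (Set.ncard_le_ncard hsub (Set.finite_singleton _))
    (le_of_eq (Set.ncard_singleton _))

lemma step_unique {v : V} {m r : ℕ}
    (htree : ∀ x : V, (G.induce (gball G x (r+1))).IsTree)
    {q q' : Σ x : V, G.Walk v x}
    (hq : q ∈ pathsFrom G v (m + (r+1))) (hq' : q' ∈ pathsFrom G v (m + (r+1)))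
    (hpre : (⟨q.2.getVert m, takeW q.2 m⟩ : Σ x : V, G.Walk v x)
          = ⟨q'.2.getVert m, takeW q'.2 m⟩)
    (hend : q.1 = q'.1) : q = q' := by
  obtain ⟨hq1, hq2⟩ := hq
  obtain ⟨hq1', hq2'⟩ := hq'
  have hg : ∀ i : ℕ, q.2.getVert (min i m) = q'.2.getVert (min i m) := by
    intro i
    have := congrArg (fun t : Σ x : V, G.Walk v x => t.2.getVert i) hpre
    simpa [takeW_getVert] using this
  have hz : q.2.getVert m = q'.2.getVert m := by simpa using hg m
  set d : G.Walk (q.2.getVert m) q.1 := dropW q.2 m with hd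
  set d' : G.Walk (q.2.getVert m) q.1 := (dropW q'.2 m).copy hz.symm hend.symm with hd'
  have hdlen : d.length ≤ r + 1 := by rw [hd, dropW_length, hq2]; omega
  have hdlen' : d'.length ≤ r + 1 := by rw [hd', Walk.length_copy, dropW_length, hq2']; omega
  have hseg : ∀ j, d.getVert j = d'.getVert j :=
    tree_segment_getVert_eq (htree (q.2.getVert m)) d d'
      (dropW_isPath hq1 m) (by rw [hd', Walk.isPath_copy]; exact dropW_isPath hq1' m)
      (support_subset_gball d hdlen) (support_subset_gball d' hdlen')
  have key : ∀ i, q.2.getVert i = q'.2.getVert i := by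
    intro i
    rcases le_or_gt i m with h | h
    · have := hg i
      rwa [min_eq_left h] at this
    · have h1 : q.2.getVert i = d.getVert (i - m) := by
        rw [hd, dropW_getVert]
        congr 1
        omega
      have h2 : q'.2.getVert i = d'.getVert (i - m) := by
        rw [hd', Walk.getVert_copy, dropW_getVert]
        congr 1
        omega
      rw [h1, h2, hseg]
  exact walk_eq_of_getVert (m + (r+1)) q.2 q'.2 hq2 hq2' key

lemma pathsFrom_step (hlf : ∀ v : V, (G.neighborSet v).Finite) {r : ℕ}
    (htree : ∀ x : V, (G.induce (gball G x (r+1))).IsTree)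
    {B : ℕ} (hB : ∀ x : V, (gball G x (r+1)).ncard ≤ B) (v : V) (m : ℕ) :
    (pathsFrom G v (m + (r+1))).ncard ≤ B * (pathsFrom G v m).ncard := by
  classical
  have hS := pathsFrom_finite hlf v (m + (r+1))
  have hT := pathsFrom_finite hlf v m
  set f : (Σ x : V, G.Walk v x) → (Σ x : V, G.Walk v x) :=
    fun q => ⟨q.2.getVert m, takeW q.2 m⟩ with hf
  have hmaps : ∀ q ∈ hS.toFinset, f q ∈ hT.toFinset := by
    intro q hqmem
    rw [Set.Finite.mem_toFinset] at hqmem ⊢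
    exact ⟨takeW_isPath hqmem.1 m, by rw [takeW_length, hqmem.2]; omega⟩
  have hfib : ∀ b ∈ hT.toFinset, (hS.toFinset.filter (fun q => f q = b)).card ≤ B := by
    intro b _
    have hgb := gball_finite hlf b.1 (r+1)
    refine le_trans (Finset.card_le_card_of_injOn (fun q => q.1)
      (t := hgb.toFinset) ?_ ?_) ?_
    · intro q hqmem
      rw [Finset.mem_coe, Finset.mem_filter, Set.Finite.mem_toFinset] at hqmem
      obtain ⟨⟨hq1, hq2⟩, hqf⟩ := hqmem
      have hb1 : b.1 = q.2.getVert m := (congrArg Sigma.fst hqf).symm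
      rw [Finset.mem_coe, Set.Finite.mem_toFinset, hb1]
      exact ⟨dropW q.2 m, by rw [dropW_length, hq2]; omega⟩
    · intro q hqmem q' hqmem' hee
      rw [Finset.coe_filter, Set.mem_setOf_eq, Set.Finite.mem_toFinset] at hqmem hqmem'
      exact step_unique htree hqmem.1 hqmem'.1 (hqmem.2.trans hqmem'.2.symm) hee
    · rw [← Set.ncard_eq_toFinset_card _ hgb]
      exact hB b.1
  have hmain := Finset.card_le_mul_card_image_of_maps_to hmaps B hfib
  rwa [← Set.ncard_eq_toFinset_card _ hS, ← Set.ncard_eq_toFinset_card _ hT] at hmain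

lemma pathsFrom_pow (hlf : ∀ v : V, (G.neighborSet v).Finite) {r : ℕ}
    (htree : ∀ x : V, (G.induce (gball G x (r+1))).IsTree)
    {B : ℕ} (hB : ∀ x : V, (gball G x (r+1)).ncard ≤ B) (v : V) :
    ∀ k : ℕ, (pathsFrom G v (k * (r+1))).ncard ≤ B ^ k
  | 0 => by simpa using pathsFrom_zero_ncard v
  | (k+1) => by
      have h1 : (k+1) * (r+1) = k * (r+1) + (r+1) := by ring
      rw [h1, pow_succ']
      exact le_trans (pathsFrom_step hlf htree hB v _)
        (Nat.mul_le_mul_left B (pathsFrom_pow hlf htree hB v k))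

lemma prob_walk_open {p : ℝ} {P : Measure (Sym2 V → Bool)} (hP : IsBernoulli G p P)
    {a b : V} (w : G.Walk a b) (hw : w.IsPath) :
    P {ω | ∀ e ∈ w.edges, ω e = true} = ENNReal.ofReal p ^ w.length := by
  classical
  have hsub : ↑w.edges.toFinset ⊆ G.edgeSet := by
    intro e he
    rw [List.coe_toFinset] at he
    exact w.edges_subset_edgeSet he
  have hform := hP.2 w.edges.toFinset hsub (fun _ => true)
  have hset : {ω : Sym2 V → Bool | ∀ e ∈ w.edges.toFinset, ω e = (fun _ => true) e}
      = {ω : Sym2 V → Bool | ∀ e ∈ w.edges, ω e = true} := by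
    ext ω
    simp [List.mem_toFinset]
  rw [hset] at hform
  rw [hform]
  simp only [if_true]
  rw [Finset.prod_const, List.toFinset_card_of_nodup hw.edges_nodup, Walk.length_edges]

lemma open_edge_true {ω : Sym2 V → Bool} {a b : V} (τ : (openSG G ω).Walk a b) :
    ∀ e ∈ τ.edges, ω e = true := by
  intro e he
  have h2 := τ.edges_subset_edgeSet he
  induction e using Sym2.ind with
  | _ a b => exact (show G.Adj a b ∧ ω s(a, b) = true from (SimpleGraph.mem_edgeSet _).mp h2).2

lemma openSG_edges_sub {ω : Sym2 V → Bool} {a b : V} (τ : (openSG G ω).Walk a b) :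
    ∀ e ∈ τ.edges, e ∈ G.edgeSet := by
  intro e he
  have h2 := τ.edges_subset_edgeSet he
  induction e using Sym2.ind with
  | _ a b => exact (SimpleGraph.mem_edgeSet _).mpr (show G.Adj a b ∧ ω s(a, b) = true from (SimpleGraph.mem_edgeSet _).mp h2).1

lemma infinite_subset_union (hlf : ∀ v : V, (G.neighborSet v).Finite) (v : V) (n : ℕ) :
    {ω : Sym2 V → Bool | (cluster G ω v).Infinite} ⊆
      ⋃ q ∈ pathsFrom G v n, {ω : Sym2 V → Bool | ∀ e ∈ (q.2).edges, ω e = true} := by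
  classical
  intro ω hω
  simp only [Set.mem_setOf_eq] at hω
  obtain ⟨x, hx, hxn⟩ : ∃ x, x ∈ cluster G ω v ∧ x ∉ gball G v n := by
    by_contra hcon
    push_neg at hcon
    exact hω ((gball_finite hlf v n).subset hcon)
  obtain ⟨w0⟩ := hx
  set p1 := w0.bypass with hp1def
  have hp1 : p1.IsPath := w0.bypass_isPath
  have hlen : n ≤ p1.length := by
    by_contra hcon
    push_neg at hcon
    exact hxn ⟨p1.transfer G (openSG_edges_sub p1), by rw [Walk.length_transfer]; omega⟩
  refine Set.mem_biUnion (?_ : (⟨p1.getVert n, (takeW p1 n).transfer G (openSG_edges_sub _)⟩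
      : Σ x : V, G.Walk v x) ∈ pathsFrom G v n) ?_
  · refine ⟨(takeW_isPath hp1 n).transfer _, ?_⟩
    rw [Walk.length_transfer, takeW_length]
    omega
  · intro e he
    rw [Walk.edges_transfer] at he
    exact open_edge_true _ e he


end Aux

/-- if all balls of radius `r+1` induce trees and `|B(x,r+1)|·p^{r+1} ≤ c < 1`
for every vertex `x`, then Bernoulli(`p`) percolation a.s. has no infinite cluster. -/
theorem no_infinite_cluster_of_treelike_small_balls
    {V : Type*} (G : SimpleGraph V) (hlf : ∀ v : V, (G.neighborSet v).Finite)
    (r : ℕ) (p : ℝ) (hp0 : 0 < p) (hp1 : p < 1) (c : ℝ) (hc : c < 1)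
    (hfin : ∀ x : V, (gball G x (r + 1)).Finite)
    (htree : ∀ x : V, (G.induce (gball G x (r + 1))).IsTree)
    (hvol : ∀ x : V, ((gball G x (r + 1)).ncard : ℝ) * p ^ (r + 1) ≤ c)
    (P : Measure (Sym2 V → Bool)) (hP : IsBernoulli G p P) (v : V) :
    P {ω | (cluster G ω v).Infinite} = 0 := by
  classical
  have hpp : (0:ℝ) < p ^ (r+1) := pow_pos hp0 _
  have hc0 : 0 ≤ c / p ^ (r+1) := by
    have h1 : (0:ℝ) ≤ ((gball G v (r+1)).ncard : ℝ) * p ^ (r+1) := by positivity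
    have hc0' : 0 ≤ c := le_trans h1 (hvol v)
    positivity
  set B : ℕ := ⌊c / p ^ (r+1)⌋₊ with hBdef
  have hB : ∀ x : V, (gball G x (r+1)).ncard ≤ B := by
    intro x
    refine Nat.le_floor ?_
    rw [le_div_iff₀ hpp]
    exact hvol x
  have hBp : (B : ℝ) * p ^ (r+1) ≤ c := by
    calc (B:ℝ) * p ^ (r+1) ≤ (c / p ^ (r+1)) * p ^ (r+1) :=
          mul_le_mul_of_nonneg_right (Nat.floor_le hc0) (le_of_lt hpp)
      _ = c := div_mul_cancel₀ c (ne_of_gt hpp)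
  have key : ∀ k : ℕ, P {ω | (cluster G ω v).Infinite} ≤ (ENNReal.ofReal c) ^ k := by
    intro k
    set n := k * (r+1) with hn
    have hSfin := pathsFrom_finite hlf v n
    have h1 : P {ω | (cluster G ω v).Infinite}
        ≤ P (⋃ q ∈ hSfin.toFinset, {ω : Sym2 V → Bool | ∀ e ∈ (q.2).edges, ω e = true}) := by
      refine measure_mono (le_trans (infinite_subset_union hlf v n) ?_)
      intro ω hω
      simp only [Set.mem_iUnion, Set.Finite.mem_toFinset] at hω ⊢
      exact hω
    have h2 := measure_biUnion_finset_le (μ := P) hSfin.toFinset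
      (fun q => {ω : Sym2 V → Bool | ∀ e ∈ (q.2).edges, ω e = true})
    have h3 : ∑ q ∈ hSfin.toFinset, P {ω | ∀ e ∈ (q.2).edges, ω e = true}
        = hSfin.toFinset.card * ENNReal.ofReal p ^ n := by
      rw [Finset.sum_congr rfl (fun q hq => ?_), Finset.sum_const, nsmul_eq_mul]
      rw [Set.Finite.mem_toFinset] at hq
      rw [prob_walk_open hP q.2 hq.1, hq.2]
    have h4 : (hSfin.toFinset.card : ℝ≥0∞) ≤ ((B ^ k : ℕ) : ℝ≥0∞) := by
      refine Nat.cast_le.mpr ?_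
      rw [← Set.ncard_eq_toFinset_card _ hSfin]
      exact pathsFrom_pow hlf htree hB v k
    have h5 : P {ω | (cluster G ω v).Infinite} ≤ ((B ^ k : ℕ) : ℝ≥0∞) * ENNReal.ofReal p ^ n :=
      le_trans h1 (le_trans h2 (le_trans (le_of_eq h3)
        (mul_le_mul_left h4 _)))
    have h6 : ((B ^ k : ℕ) : ℝ≥0∞) * ENNReal.ofReal p ^ n
        = ((B : ℝ≥0∞) * ENNReal.ofReal p ^ (r+1)) ^ k := by
      rw [hn, Nat.cast_pow, mul_pow, pow_mul']
    have h7 : (B : ℝ≥0∞) * ENNReal.ofReal p ^ (r+1) ≤ ENNReal.ofReal c := by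
      rw [← ENNReal.ofReal_natCast B, ← ENNReal.ofReal_pow hp0.le,
        ← ENNReal.ofReal_mul (Nat.cast_nonneg B)]
      exact ENNReal.ofReal_le_ofReal hBp
    calc P {ω | (cluster G ω v).Infinite} ≤ ((B : ℝ≥0∞) * ENNReal.ofReal p ^ (r+1)) ^ k :=
          h6 ▸ h5
      _ ≤ (ENNReal.ofReal c) ^ k := pow_le_pow_left' h7 k
  have hlim := ENNReal.tendsto_pow_atTop_nhds_zero_of_lt_one (ENNReal.ofReal_lt_one.mpr hc)
  have hle : P {ω | (cluster G ω v).Infinite} ≤ 0 := ge_of_tendsto' hlim key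
  exact nonpos_iff_eq_zero.mp hle


end PercolationPaper
end

section
/- Let f : [0,1] → [0,1] be continuous and strictly convex with f(1) = 1, and for each n let f_n : [0,1] → [0,1] be continuous with f_n(1) = 1. Let q be the smallest fixed point of f in [0,1] and q_n the smallest fixed point of f_n in [0,1] (these exist, since the fixed-point sets are nonempty—they contain 1—closed subsets of [0,1]). If f_n → f uniformly on [0,1], then q_n → q. -/
lemma fixedSet_closed {g : ℝ → ℝ} (hg : ContinuousOn g (Set.Icc 0 1)) :
    IsClosed {t : ℝ | t ∈ Set.Icc (0:ℝ) 1 ∧ g t = t} := by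
  have h : {t : ℝ | t ∈ Set.Icc (0:ℝ) 1 ∧ g t = t}
      = Set.Icc 0 1 ∩ (fun x => g x - x) ⁻¹' {0} := by
    ext x; simp [sub_eq_zero]
  rw [h]
  exact (hg.sub continuousOn_id).preimage_isClosed_of_isClosed isClosed_Icc isClosed_singleton

lemma fixed_sInf_mem {g : ℝ → ℝ} (hg : ContinuousOn g (Set.Icc 0 1)) (hg1 : g 1 = 1) :
    sInf {t : ℝ | t ∈ Set.Icc (0:ℝ) 1 ∧ g t = t} ∈ {t : ℝ | t ∈ Set.Icc (0:ℝ) 1 ∧ g t = t} :=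
  (fixedSet_closed hg).csInf_mem ⟨1, ⟨by norm_num, hg1⟩⟩ ⟨0, fun t ht => ht.1.1⟩

/-- if continuous self-maps `f_n` of `[0,1]` fixing `1` converge uniformly to a
continuous strictly convex self-map `f` of `[0,1]` fixing `1`, then the smallest fixed
points `q_n` of the `f_n` converge to the smallest fixed point `q` of `f`. -/
theorem smallest_fixed_point_continuity
    (f : ℝ → ℝ) (fn : ℕ → ℝ → ℝ)
    (hf_cont : ContinuousOn f (Set.Icc 0 1))
    (hf_maps : Set.MapsTo f (Set.Icc 0 1) (Set.Icc 0 1))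
    (hf_conv : StrictConvexOn ℝ (Set.Icc 0 1) f)
    (hf1 : f 1 = 1)
    (hfn_cont : ∀ n, ContinuousOn (fn n) (Set.Icc 0 1))
    (hfn_maps : ∀ n, Set.MapsTo (fn n) (Set.Icc 0 1) (Set.Icc 0 1))
    (hfn1 : ∀ n, fn n 1 = 1)
    (hunif : TendstoUniformlyOn fn f Filter.atTop (Set.Icc 0 1)) :
    Filter.Tendsto (fun n => sInf {t : ℝ | t ∈ Set.Icc (0:ℝ) 1 ∧ fn n t = t}) Filter.atTop
      (nhds (sInf {t : ℝ | t ∈ Set.Icc (0:ℝ) 1 ∧ f t = t})) := by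
  have hbdd : BddBelow {t : ℝ | t ∈ Set.Icc (0:ℝ) 1 ∧ f t = t} :=
    ⟨0, fun s hs => hs.1.1⟩
  have hbddn : ∀ n, BddBelow {t : ℝ | t ∈ Set.Icc (0:ℝ) 1 ∧ fn n t = t} :=
    fun n => ⟨0, fun s hs => hs.1.1⟩
  set q : ℝ := sInf {t : ℝ | t ∈ Set.Icc (0:ℝ) 1 ∧ f t = t} with hq_def
  set qn : ℕ → ℝ := fun n => sInf {t : ℝ | t ∈ Set.Icc (0:ℝ) 1 ∧ fn n t = t} with hqn_def
  have hqmem := fixed_sInf_mem hf_cont hf1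
  have hq0 : 0 ≤ q := hqmem.1.1
  have hq1 : q ≤ 1 := hqmem.1.2
  have hfq : f q = q := hqmem.2
  have hqnmem : ∀ n, qn n ∈ {t : ℝ | t ∈ Set.Icc (0:ℝ) 1 ∧ fn n t = t} :=
    fun n => fixed_sInf_mem (hfn_cont n) (hfn1 n)
  have hqn0 : ∀ n, 0 ≤ qn n := fun n => (hqnmem n).1.1
  have hqn1 : ∀ n, qn n ≤ 1 := fun n => (hqnmem n).1.2
  -- key fact 1: f t > t for t ∈ [0, q)
  have key1 : ∀ t, 0 ≤ t → t < q → t < f t := by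
    intro t ht0 htq
    by_contra hle
    push_neg at hle
    have htI : t ∈ Set.Icc (0:ℝ) 1 := ⟨ht0, le_trans htq.le hq1⟩
    rcases eq_or_lt_of_le hle with heq | hlt
    · exact absurd (csInf_le hbdd ⟨htI, heq⟩) (not_le.mpr htq)
    · -- f t < t, IVT on [0, t]
      have hcont : ContinuousOn (fun x => f x - x) (Set.Icc 0 t) :=
        (hf_cont.sub continuousOn_id).mono (Set.Icc_subset_Icc le_rfl htI.2)
      have h0 : (0:ℝ) ≤ f 0 - 0 := by
        have := (hf_maps (Set.left_mem_Icc.mpr zero_le_one)).1; linarith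
      have h0mem : (0:ℝ) ∈ Set.Icc (f t - t) (f 0 - 0) := ⟨by linarith, h0⟩
      obtain ⟨u, huI, hu⟩ := intermediate_value_Icc' ht0 hcont h0mem
      have huf : f u = u := by
        have := sub_eq_zero.mp hu; linarith
      have : q ≤ u := csInf_le hbdd ⟨⟨huI.1, le_trans huI.2 htI.2⟩, huf⟩
      linarith [huI.2]
  -- key fact 2: f s < s for s ∈ (q, 1)
  have key2 : ∀ s, q < s → s < 1 → f s < s := by
    intro s hqs hs1
    have hql : q < 1 := lt_trans hqs hs1
    have hden : (0:ℝ) < 1 - q := by linarith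
    have ha : 0 < (1 - s) / (1 - q) := div_pos (by linarith) hden
    have hb : 0 < (s - q) / (1 - q) := div_pos (by linarith) hden
    have hab : (1 - s) / (1 - q) + (s - q) / (1 - q) = 1 := by field_simp; ring
    have hcomb : ((1 - s) / (1 - q)) * q + ((s - q) / (1 - q)) * 1 = s := by
      field_simp; ring
    have h := hf_conv.2 ⟨hq0, hq1⟩ (Set.right_mem_Icc.mpr zero_le_one)
      (by linarith : q ≠ 1) ha hb hab
    rw [smul_eq_mul, smul_eq_mul, smul_eq_mul, smul_eq_mul, hfq, hf1, hcomb] at h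
    exact h
  rw [Metric.tendsto_nhds]
  intro ε hε
  -- upper bound eventually: qn n < q + ε
  have hupper : ∀ᶠ n in Filter.atTop, qn n < q + ε := by
    rcases eq_or_lt_of_le hq1 with hq_eq | hq_lt
    · exact Filter.Eventually.of_forall fun n => by linarith [hqn1 n, hq_eq]
    · obtain ⟨s, hqs, hs1, hsε⟩ : ∃ s, q < s ∧ s < 1 ∧ s < q + ε :=
        ⟨min (q + ε / 2) ((q + 1) / 2), lt_min (by linarith) (by linarith),
          lt_of_le_of_lt (min_le_right _ _) (by linarith),
          lt_of_le_of_lt (min_le_left _ _) (by linarith)⟩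
      have hs0 : 0 ≤ s := le_trans hq0 hqs.le
      have hfs : f s < s := key2 s hqs hs1
      have hev := (Metric.tendstoUniformlyOn_iff.mp hunif) (s - f s) (by linarith)
      filter_upwards [hev] with n hn
      have hns : fn n s < s := by
        have := hn s ⟨hs0, hs1.le⟩
        rw [Real.dist_eq, abs_sub_lt_iff] at this
        linarith [this.1, this.2]
      -- IVT for fn n on [0, s]
      have hcont : ContinuousOn (fun x => fn n x - x) (Set.Icc 0 s) :=
        ((hfn_cont n).sub continuousOn_id).mono (Set.Icc_subset_Icc le_rfl hs1.le)
      have h0 : (0:ℝ) ≤ fn n 0 - 0 := by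
        have := (hfn_maps n (Set.left_mem_Icc.mpr zero_le_one)).1; linarith
      have h0mem : (0:ℝ) ∈ Set.Icc (fn n s - s) (fn n 0 - 0) := ⟨by linarith, h0⟩
      obtain ⟨u, huI, hu⟩ := intermediate_value_Icc' hs0 hcont h0mem
      have huf : fn n u = u := by
        have := sub_eq_zero.mp hu; linarith
      have : qn n ≤ u := csInf_le (hbddn n) ⟨⟨huI.1, le_trans huI.2 hs1.le⟩, huf⟩
      linarith [huI.2]
  -- lower bound eventually: q - ε < qn n
  have hlower : ∀ᶠ n in Filter.atTop, q - ε < qn n := by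
    rcases lt_or_ge q ε with hqε | hqε
    · exact Filter.Eventually.of_forall fun n => by linarith [hqn0 n]
    · obtain ⟨r, hr0, hrq, hrε⟩ : ∃ r, 0 ≤ r ∧ r < q ∧ q - ε < r :=
        ⟨q - ε / 2, by linarith, by linarith, by linarith⟩
      have hcomp : IsCompact (Set.Icc (0:ℝ) r) := isCompact_Icc
      have hcont : ContinuousOn (fun x => f x - x) (Set.Icc 0 r) :=
        (hf_cont.sub continuousOn_id).mono
          (Set.Icc_subset_Icc le_rfl (by linarith : r ≤ 1))
      obtain ⟨x₀, hx₀I, hx₀min⟩ :=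
        hcomp.exists_isMinOn ⟨0, Set.left_mem_Icc.mpr hr0⟩ hcont
      have hδ : 0 < f x₀ - x₀ := by
        have := key1 x₀ hx₀I.1 (lt_of_le_of_lt hx₀I.2 hrq); linarith
      have hev := (Metric.tendstoUniformlyOn_iff.mp hunif) (f x₀ - x₀) hδ
      filter_upwards [hev] with n hn
      have hlb : ∀ t ∈ {t : ℝ | t ∈ Set.Icc (0:ℝ) 1 ∧ fn n t = t}, r ≤ t := by
        intro t ht
        by_contra hcon
        push_neg at hcon
        have htr : t ∈ Set.Icc (0:ℝ) r := ⟨ht.1.1, hcon.le⟩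
        have h1 := hx₀min htr
        simp only [Set.mem_setOf_eq] at h1
        have h2 := hn t ht.1
        rw [Real.dist_eq, abs_sub_lt_iff] at h2
        have h3 := ht.2
        linarith [h2.1, h2.2]
      have : r ≤ qn n :=
        le_csInf ⟨1, ⟨Set.right_mem_Icc.mpr zero_le_one, hfn1 n⟩⟩ hlb
      linarith
  filter_upwards [hupper, hlower] with n h1 h2
  rw [Real.dist_eq, abs_sub_lt_iff]
  constructor <;> linarith
end
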